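/- arXiv:2602.04387 — 8 statements merged into one kernel-verified Lean document; each statement's English description precedes it below -/
import Mathlib

section
/- Let q be a real quaternion, and for integers ℓ ≥ 1 and k ≥ 2ℓ−1 set H_ℓ^k(q) := Σ_{j=0}^{k−2ℓ+1} C(ℓ+j−1, ℓ−1)·C(k−ℓ−j, ℓ−1)·q^{k−2ℓ+1−j}·(star q)^j. Then H_ℓ^k(q) is fixed by quaternionic conjugation, i.e. star(H_ℓ^k(q)) = H_ℓ^k(q); equivalently, H_ℓ^k(q) is a real scalar. (Lemma 5.2 of the paper: the polynomials H_ℓ^k are real-valued.) -/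
/-- The polynomials `H_ℓ^k(q) = ∑_{j=0}^{k-2ℓ+1} C(ℓ+j-1,ℓ-1) C(k-ℓ-j,ℓ-1) q^{k-2ℓ+1-j} q̄^j`,
with the convention `H_ℓ^k = 0` when `k < 2ℓ - 1` (the index range is then empty). -/
noncomputable def Hpoly (ℓ k : ℕ) (q : Quaternion ℝ) : Quaternion ℝ :=
  ∑ j ∈ Finset.range (k + 2 - 2 * ℓ),
    ((Nat.choose (ℓ - 1 + j) (ℓ - 1) * Nat.choose (k - ℓ - j) (ℓ - 1) : ℕ) : Quaternion ℝ) *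
      q ^ (k + 1 - 2 * ℓ - j) * (star q) ^ j

/-- **Lemma 5.2.** The polynomials `H_ℓ^k` are fixed by quaternionic conjugation,
i.e. they are real-valued. -/
theorem star_Hpoly (q : Quaternion ℝ) (ℓ k : ℕ) (hℓ : 1 ≤ ℓ) (hk : 2 * ℓ - 1 ≤ k) :
    star (Hpoly ℓ k q) = Hpoly ℓ k q := by
  unfold Hpoly
  rw [star_sum]
  set n := k + 2 - 2 * ℓ with hn
  nth_rewrite 2 [← Finset.sum_range_reflect]
  apply Finset.sum_congr rfl
  intro j hj
  simp only [Finset.mem_range] at hj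
  have h1 : k + 1 - 2 * ℓ - (n - 1 - j) = j := by omega
  have h2 : ℓ - 1 + (n - 1 - j) = k - ℓ - j := by omega
  have h3 : k - ℓ - (n - 1 - j) = ℓ - 1 + j := by omega
  rw [h1, h2, h3]
  rw [star_mul, star_mul, star_pow, star_pow, star_star, star_natCast]
  have h4 : n - 1 - j = k + 1 - 2 * ℓ - j := by omega
  rw [mul_assoc, h4, Nat.mul_comm ((k - ℓ - j).choose (ℓ - 1)) _,
    (Nat.cast_commute ((ℓ - 1 + j).choose (ℓ - 1) * (k - ℓ - j).choose (ℓ - 1))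
      (q ^ j * star q ^ (k + 1 - 2 * ℓ - j))).eq, mul_assoc]
end

section
/- Let q be a real quaternion and let ℓ ≥ 1, k ≥ 2ℓ−1 be integers. Then H_{ℓ+1}^{k+2}(q) − 2·(re q)·H_{ℓ+1}^{k+1}(q) + ‖q‖²·H_{ℓ+1}^{k}(q) = H_ℓ^{k}(q), where by convention H_{ℓ'}^{k'}(q) := 0 whenever k' < 2ℓ'−1. (Lemma 5.9 of the paper: the three-term recursion satisfied by the polynomials H_ℓ^k.) -/
/-- **Lemma 5.9.** The three-term recursion
`H_{ℓ+1}^{k+2}(q) - 2 (re q) H_{ℓ+1}^{k+1}(q) + ‖q‖² H_{ℓ+1}^k(q) = H_ℓ^k(q)`. -/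
theorem Hpoly_recursion (q : Quaternion ℝ) (ℓ k : ℕ) (hℓ : 1 ≤ ℓ) (hk : 2 * ℓ - 1 ≤ k) :
    Hpoly (ℓ + 1) (k + 2) q - ((2 * q.re : ℝ) : Quaternion ℝ) * Hpoly (ℓ + 1) (k + 1) q +
        ((‖q‖ ^ 2 : ℝ) : Quaternion ℝ) * Hpoly (ℓ + 1) k q =
      Hpoly ℓ k q := by
  obtain ⟨m, rfl⟩ : ∃ m, ℓ = m + 1 := ⟨ℓ - 1, by omega⟩
  obtain ⟨n, rfl⟩ : ∃ n, k = 2 * m + 1 + n := ⟨k - (2 * m + 1), by omega⟩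
  have hcomm : Commute q (star q) := by
    unfold Commute SemiconjBy
    rw [Quaternion.self_mul_star, Quaternion.star_mul_self]
  have hre : ((2 * q.re : ℝ) : Quaternion ℝ) = q + star q := (Quaternion.self_add_star' q).symm
  have hnorm : ((‖q‖ ^ 2 : ℝ) : Quaternion ℝ) = q * star q := by
    rw [sq, ← Quaternion.normSq_eq_norm_mul_self, Quaternion.self_mul_star]
  -- canonical forms of the four Hpoly's
  have hA : Hpoly (m + 1 + 1) (2 * m + 1 + n + 2) q =
      ∑ j ∈ Finset.range (n + 1),
        ((Nat.choose (m + 1 + j) (m + 1) * Nat.choose (m + n + 1 - j) (m + 1) : ℕ) : Quaternion ℝ) *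
          (q ^ (n - j) * (star q) ^ j) := by
    unfold Hpoly
    rw [show 2 * m + 1 + n + 2 + 2 - 2 * (m + 1 + 1) = n + 1 by omega]
    refine Finset.sum_congr rfl fun j hj => ?_
    rw [show 2 * m + 1 + n + 2 + 1 - 2 * (m + 1 + 1) - j = n - j by omega,
        show m + 1 + 1 - 1 + j = m + 1 + j by omega,
        show m + 1 + 1 - 1 = m + 1 by omega,
        show 2 * m + 1 + n + 2 - (m + 1 + 1) - j = m + n + 1 - j by omega, mul_assoc]
  have hB : Hpoly (m + 1 + 1) (2 * m + 1 + n + 1) q =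
      ∑ j ∈ Finset.range n,
        ((Nat.choose (m + 1 + j) (m + 1) * Nat.choose (m + n - j) (m + 1) : ℕ) : Quaternion ℝ) *
          (q ^ (n - 1 - j) * (star q) ^ j) := by
    unfold Hpoly
    rw [show 2 * m + 1 + n + 1 + 2 - 2 * (m + 1 + 1) = n by omega]
    refine Finset.sum_congr rfl fun j hj => ?_
    rw [show 2 * m + 1 + n + 1 + 1 - 2 * (m + 1 + 1) - j = n - 1 - j by omega,
        show m + 1 + 1 - 1 + j = m + 1 + j by omega,
        show m + 1 + 1 - 1 = m + 1 by omega,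
        show 2 * m + 1 + n + 1 - (m + 1 + 1) - j = m + n - j by omega, mul_assoc]
  have hC : Hpoly (m + 1 + 1) (2 * m + 1 + n) q =
      ∑ j ∈ Finset.range (n - 1),
        ((Nat.choose (m + 1 + j) (m + 1) * Nat.choose (m + n - 1 - j) (m + 1) : ℕ) : Quaternion ℝ) *
          (q ^ (n - 2 - j) * (star q) ^ j) := by
    unfold Hpoly
    rw [show 2 * m + 1 + n + 2 - 2 * (m + 1 + 1) = n - 1 by omega]
    refine Finset.sum_congr rfl fun j hj => ?_
    rw [show 2 * m + 1 + n + 1 - 2 * (m + 1 + 1) - j = n - 2 - j by omega,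
        show m + 1 + 1 - 1 + j = m + 1 + j by omega,
        show m + 1 + 1 - 1 = m + 1 by omega,
        show 2 * m + 1 + n - (m + 1 + 1) - j = m + n - 1 - j by omega, mul_assoc]
  have hD : Hpoly (m + 1) (2 * m + 1 + n) q =
      ∑ j ∈ Finset.range (n + 1),
        ((Nat.choose (m + j) m * Nat.choose (m + n - j) m : ℕ) : Quaternion ℝ) *
          (q ^ (n - j) * (star q) ^ j) := by
    unfold Hpoly
    rw [show 2 * m + 1 + n + 2 - 2 * (m + 1) = n + 1 by omega]
    refine Finset.sum_congr rfl fun j hj => ?_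
    rw [show 2 * m + 1 + n + 1 - 2 * (m + 1) - j = n - j by omega,
        show m + 1 - 1 + j = m + j by omega,
        show m + 1 - 1 = m by omega,
        show 2 * m + 1 + n - (m + 1) - j = m + n - j by omega, mul_assoc]
  rw [hA, hB, hC, hD, hre, hnorm]
  -- the three product computations
  have E1 : q * (∑ j ∈ Finset.range n,
        ((Nat.choose (m + 1 + j) (m + 1) * Nat.choose (m + n - j) (m + 1) : ℕ) : Quaternion ℝ) *
          (q ^ (n - 1 - j) * (star q) ^ j)) =
      ∑ j ∈ Finset.range (n + 1),
        ((Nat.choose (m + 1 + j) (m + 1) * Nat.choose (m + n - j) (m + 1) : ℕ) : Quaternion ℝ) *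
          (q ^ (n - j) * (star q) ^ j) := by
    rw [Finset.mul_sum, Finset.sum_range_succ,
        show m + n - n = m by omega, Nat.choose_eq_zero_of_lt (by omega : m < m + 1)]
    simp only [Nat.mul_zero, Nat.cast_zero, zero_mul, add_zero]
    refine Finset.sum_congr rfl fun j hj => ?_
    have hj' : j < n := Finset.mem_range.mp hj
    rw [show n - j = (n - 1 - j) + 1 by omega, pow_succ' q (n - 1 - j),
        ((Nat.cast_commute
          (Nat.choose (m + 1 + j) (m + 1) * Nat.choose (m + n - j) (m + 1)) q).symm).left_comm,
        mul_assoc q]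
  have E2 : star q * (∑ j ∈ Finset.range n,
        ((Nat.choose (m + 1 + j) (m + 1) * Nat.choose (m + n - j) (m + 1) : ℕ) : Quaternion ℝ) *
          (q ^ (n - 1 - j) * (star q) ^ j)) =
      ∑ j ∈ Finset.range (n + 1),
        ((Nat.choose (m + j) (m + 1) * Nat.choose (m + n + 1 - j) (m + 1) : ℕ) : Quaternion ℝ) *
          (q ^ (n - j) * (star q) ^ j) := by
    rw [Finset.mul_sum, Finset.sum_range_succ']
    rw [show m + 0 = m by omega, Nat.choose_eq_zero_of_lt (by omega : m < m + 1)]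
    simp only [Nat.zero_mul, Nat.cast_zero, zero_mul, add_zero]
    refine Finset.sum_congr rfl fun j hj => ?_
    have hj' : j < n := Finset.mem_range.mp hj
    rw [show m + (j + 1) = m + 1 + j by omega, show m + n + 1 - (j + 1) = m + n - j by omega,
        show n - (j + 1) = n - 1 - j by omega, pow_succ' (star q) j,
        ((Nat.cast_commute (Nat.choose (m + 1 + j) (m + 1) * Nat.choose (m + n - j) (m + 1))
          (star q)).symm).left_comm,
        ← mul_assoc (star q), (hcomm.symm.pow_right (n - 1 - j)).eq, mul_assoc (q ^ (n - 1 - j)),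
        ← mul_assoc]
  have E3 : (q * star q) * (∑ j ∈ Finset.range (n - 1),
        ((Nat.choose (m + 1 + j) (m + 1) * Nat.choose (m + n - 1 - j) (m + 1) : ℕ) : Quaternion ℝ) *
          (q ^ (n - 2 - j) * (star q) ^ j)) =
      ∑ j ∈ Finset.range (n + 1),
        ((Nat.choose (m + j) (m + 1) * Nat.choose (m + n - j) (m + 1) : ℕ) : Quaternion ℝ) *
          (q ^ (n - j) * (star q) ^ j) := by
    rw [Finset.mul_sum, Finset.sum_range_succ']
    rw [show m + 0 = m by omega, Nat.choose_eq_zero_of_lt (by omega : m < m + 1)]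
    simp only [Nat.zero_mul, Nat.cast_zero, zero_mul, add_zero]
    rw [show (∑ j ∈ Finset.range n,
        ((Nat.choose (m + (j + 1)) (m + 1) * Nat.choose (m + n - (j + 1)) (m + 1) : ℕ) : Quaternion ℝ) *
          (q ^ (n - (j + 1)) * (star q) ^ (j + 1))) =
        ∑ j ∈ Finset.range (n - 1),
        ((Nat.choose (m + (j + 1)) (m + 1) * Nat.choose (m + n - (j + 1)) (m + 1) : ℕ) : Quaternion ℝ) *
          (q ^ (n - (j + 1)) * (star q) ^ (j + 1)) from
      (Finset.sum_subset (fun x hx => by simp only [Finset.mem_range] at *; omega)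
        (fun x hx hx' => by
          have h1 : x < n := Finset.mem_range.mp hx
          have h2 : ¬ x < n - 1 := fun h => hx' (Finset.mem_range.mpr h)
          rw [show m + n - (x + 1) = m by omega, Nat.choose_eq_zero_of_lt (by omega : m < m + 1)]
          simp)).symm]
    refine Finset.sum_congr rfl fun j hj => ?_
    have hj' : j < n - 1 := Finset.mem_range.mp hj
    rw [show m + (j + 1) = m + 1 + j by omega, show m + n - (j + 1) = m + n - 1 - j by omega,
        show n - (j + 1) = n - 1 - j by omega,
        ((Nat.cast_commute (Nat.choose (m + 1 + j) (m + 1) * Nat.choose (m + n - 1 - j) (m + 1))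
          (q * star q)).symm).left_comm,
        show q * star q * (q ^ (n - 2 - j) * star q ^ j) = q ^ (n - 1 - j) * star q ^ (j + 1) from ?_]
    rw [mul_assoc q, ← mul_assoc (star q), (hcomm.symm.pow_right (n - 2 - j)).eq,
        mul_assoc (q ^ (n - 2 - j)), ← mul_assoc q, ← pow_succ' q (n - 2 - j),
        show n - 2 - j + 1 = n - 1 - j by omega, pow_succ' (star q) j]
  rw [add_mul, E1, E2, E3]
  -- the Pascal-identity computation on coefficients
  have key : (∑ j ∈ Finset.range (n + 1),
        ((Nat.choose (m + 1 + j) (m + 1) * Nat.choose (m + n + 1 - j) (m + 1) : ℕ) : Quaternion ℝ) *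
          (q ^ (n - j) * (star q) ^ j)) +
      (∑ j ∈ Finset.range (n + 1),
        ((Nat.choose (m + j) (m + 1) * Nat.choose (m + n - j) (m + 1) : ℕ) : Quaternion ℝ) *
          (q ^ (n - j) * (star q) ^ j)) =
      (∑ j ∈ Finset.range (n + 1),
        ((Nat.choose (m + j) m * Nat.choose (m + n - j) m : ℕ) : Quaternion ℝ) *
          (q ^ (n - j) * (star q) ^ j)) +
      ((∑ j ∈ Finset.range (n + 1),
        ((Nat.choose (m + 1 + j) (m + 1) * Nat.choose (m + n - j) (m + 1) : ℕ) : Quaternion ℝ) *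
          (q ^ (n - j) * (star q) ^ j)) +
      (∑ j ∈ Finset.range (n + 1),
        ((Nat.choose (m + j) (m + 1) * Nat.choose (m + n + 1 - j) (m + 1) : ℕ) : Quaternion ℝ) *
          (q ^ (n - j) * (star q) ^ j))) := by
    rw [← Finset.sum_add_distrib, ← Finset.sum_add_distrib, ← Finset.sum_add_distrib]
    refine Finset.sum_congr rfl fun j hj => ?_
    have hjn : j ≤ n := by have := Finset.mem_range.mp hj; omega
    rw [← add_mul, ← add_mul, ← add_mul]
    congr 1
    have hnat : Nat.choose (m + 1 + j) (m + 1) * Nat.choose (m + n + 1 - j) (m + 1) +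
        Nat.choose (m + j) (m + 1) * Nat.choose (m + n - j) (m + 1) =
        Nat.choose (m + j) m * Nat.choose (m + n - j) m +
          (Nat.choose (m + 1 + j) (m + 1) * Nat.choose (m + n - j) (m + 1) +
            Nat.choose (m + j) (m + 1) * Nat.choose (m + n + 1 - j) (m + 1)) := by
      rw [show m + n + 1 - j = (m + n - j) + 1 by omega, show m + 1 + j = (m + j) + 1 by omega,
          Nat.choose_succ_succ, Nat.choose_succ_succ]
      ring
    exact_mod_cast congrArg (fun x : ℕ => (x : Quaternion ℝ)) hnat
  set SA := ∑ j ∈ Finset.range (n + 1),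
        ((Nat.choose (m + 1 + j) (m + 1) * Nat.choose (m + n + 1 - j) (m + 1) : ℕ) : Quaternion ℝ) *
          (q ^ (n - j) * (star q) ^ j) with hSA
  set SB := ∑ j ∈ Finset.range (n + 1),
        ((Nat.choose (m + 1 + j) (m + 1) * Nat.choose (m + n - j) (m + 1) : ℕ) : Quaternion ℝ) *
          (q ^ (n - j) * (star q) ^ j) with hSB
  set SB' := ∑ j ∈ Finset.range (n + 1),
        ((Nat.choose (m + j) (m + 1) * Nat.choose (m + n + 1 - j) (m + 1) : ℕ) : Quaternion ℝ) *
          (q ^ (n - j) * (star q) ^ j) with hSB'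
  set SC := ∑ j ∈ Finset.range (n + 1),
        ((Nat.choose (m + j) (m + 1) * Nat.choose (m + n - j) (m + 1) : ℕ) : Quaternion ℝ) *
          (q ^ (n - j) * (star q) ^ j) with hSC
  set SD := ∑ j ∈ Finset.range (n + 1),
        ((Nat.choose (m + j) m * Nat.choose (m + n - j) m : ℕ) : Quaternion ℝ) *
          (q ^ (n - j) * (star q) ^ j) with hSD
  have hfin : SA - (SB + SB') + SC = (SA + SC) - (SB + SB') := by abel
  rw [hfin, key]
  abel
end

section
/- Let q be a real quaternion and let ℓ ≥ 1, k ≥ 2ℓ be integers. Then P_ℓ^k(q) = H_{ℓ+1}^{k+1}(q) − (star q)·H_{ℓ+1}^{k}(q), where P_ℓ^k(q) := Σ_{j=0}^{k−2ℓ} C(ℓ+j−1, ℓ−1)·C(k−ℓ−j, ℓ)·q^{k−2ℓ−j}·(star q)^j. (Proposition 5.13 of the paper: the relation between the axially Analytic-Harmonic polynomials P_ℓ^k and the polynomials H_ℓ^k.) -/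
/-- The axially Analytic-Harmonic polynomials
`P_ℓ^k(q) = ∑_{j=0}^{k-2ℓ} C(ℓ+j-1,ℓ-1) C(k-ℓ-j,ℓ) q^{k-2ℓ-j} q̄^j` (for `k ≥ 2ℓ`). -/
noncomputable def Ppoly (ℓ k : ℕ) (q : Quaternion ℝ) : Quaternion ℝ :=
  ∑ j ∈ Finset.range (k + 1 - 2 * ℓ),
    ((Nat.choose (ℓ - 1 + j) (ℓ - 1) * Nat.choose (k - ℓ - j) ℓ : ℕ) : Quaternion ℝ) *
      q ^ (k - 2 * ℓ - j) * (star q) ^ j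

private lemma cast_mul_pow_congr (q : Quaternion ℝ) {a b c a' b' c' j : ℕ}
    (h1 : a = a') (h2 : b = b') (h3 : c = c') :
    ((Nat.choose a b * Nat.choose c b : ℕ) : Quaternion ℝ) * q ^ (c' - b') * (star q) ^ j =
    ((Nat.choose a' b' * Nat.choose c' b' : ℕ) : Quaternion ℝ) * q ^ (c' - b') * (star q) ^ j := by
  subst h1 h2 h3; rfl

/-- **Proposition 5.13.** The relation `P_ℓ^k(q) = H_{ℓ+1}^{k+1}(q) - q̄ · H_{ℓ+1}^k(q)`. -/
theorem Ppoly_eq_Hpoly_sub (q : Quaternion ℝ) (ℓ k : ℕ) (hℓ : 1 ≤ ℓ) (hk : 2 * ℓ ≤ k) :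
    Ppoly ℓ k q = Hpoly (ℓ + 1) (k + 1) q - star q * Hpoly (ℓ + 1) k q := by
  obtain ⟨m, rfl⟩ := Nat.exists_eq_add_of_le hℓ
  obtain ⟨n, rfl⟩ := Nat.exists_eq_add_of_le hk
  have hcomm : ∀ e : ℕ, star q * q ^ e = q ^ e * star q := fun e => by
    induction e with
    | zero => simp
    | succ e ih => rw [pow_succ', ← mul_assoc, star_comm_self', mul_assoc, ih, ← mul_assoc]
  -- normalized forms of the three polynomial sums
  have hP : Ppoly (1 + m) (2 * (1 + m) + n) q =
      ∑ j ∈ Finset.range (n + 1),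
        ((Nat.choose (m + j) m * Nat.choose (m + 1 + n - j) (m + 1) : ℕ) : Quaternion ℝ) *
          q ^ (n - j) * (star q) ^ j := by
    unfold Ppoly
    rw [show 2 * (1 + m) + n + 1 - 2 * (1 + m) = n + 1 by omega]
    refine Finset.sum_congr rfl fun j _ => ?_
    rw [show 2 * (1 + m) + n - 2 * (1 + m) - j = n - j by omega,
      show 1 + m - 1 + j = m + j by omega, show 1 + m - 1 = m by omega,
      show 2 * (1 + m) + n - (1 + m) - j = m + 1 + n - j by omega,
      show 1 + m = m + 1 by omega]
  have hH1 : Hpoly ((1 + m) + 1) ((2 * (1 + m) + n) + 1) q =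
      ∑ j ∈ Finset.range (n + 1),
        ((Nat.choose (m + 1 + j) (m + 1) * Nat.choose (m + 1 + n - j) (m + 1) : ℕ) :
          Quaternion ℝ) * q ^ (n - j) * (star q) ^ j := by
    unfold Hpoly
    rw [show 2 * (1 + m) + n + 1 + 2 - 2 * ((1 + m) + 1) = n + 1 by omega]
    refine Finset.sum_congr rfl fun j _ => ?_
    rw [show 2 * (1 + m) + n + 1 + 1 - 2 * ((1 + m) + 1) - j = n - j by omega,
      show (1 + m) + 1 - 1 + j = m + 1 + j by omega, show (1 + m) + 1 - 1 = m + 1 by omega,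
      show 2 * (1 + m) + n + 1 - ((1 + m) + 1) - j = m + 1 + n - j by omega]
  have hH2 : Hpoly ((1 + m) + 1) (2 * (1 + m) + n) q =
      ∑ j ∈ Finset.range n,
        ((Nat.choose (m + 1 + j) (m + 1) * Nat.choose (m + n - j) (m + 1) : ℕ) :
          Quaternion ℝ) * q ^ (n - 1 - j) * (star q) ^ j := by
    unfold Hpoly
    rw [show 2 * (1 + m) + n + 2 - 2 * ((1 + m) + 1) = n by omega]
    refine Finset.sum_congr rfl fun j _ => ?_
    rw [show 2 * (1 + m) + n + 1 - 2 * ((1 + m) + 1) - j = n - 1 - j by omega,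
      show (1 + m) + 1 - 1 + j = m + 1 + j by omega, show (1 + m) + 1 - 1 = m + 1 by omega,
      show 2 * (1 + m) + n - ((1 + m) + 1) - j = m + n - j by omega]
  rw [hP, hH1, hH2, Finset.mul_sum]
  have eC : ∀ j ∈ Finset.range n,
      star q * (((Nat.choose (m + 1 + j) (m + 1) * Nat.choose (m + n - j) (m + 1) : ℕ) :
          Quaternion ℝ) * q ^ (n - 1 - j) * (star q) ^ j)
      = ((Nat.choose (m + 1 + j) (m + 1) * Nat.choose (m + n - j) (m + 1) : ℕ) :
          Quaternion ℝ) * q ^ (n - 1 - j) * (star q) ^ (j + 1) := fun j _ => by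
    have hcast : star q * ((Nat.choose (m + 1 + j) (m + 1) * Nat.choose (m + n - j) (m + 1) :
        ℕ) : Quaternion ℝ) = ((Nat.choose (m + 1 + j) (m + 1) *
        Nat.choose (m + n - j) (m + 1) : ℕ) : Quaternion ℝ) * star q :=
      (Nat.cast_commute _ _).symm.eq
    rw [← mul_assoc, ← mul_assoc, hcast, mul_assoc _ (star q) _, hcomm, ← mul_assoc,
      mul_assoc, pow_succ']
  rw [Finset.sum_congr rfl eC]
  rw [Finset.sum_range_succ' (fun j => ((Nat.choose (m + j) m *
        Nat.choose (m + 1 + n - j) (m + 1) : ℕ) : Quaternion ℝ) * q ^ (n - j) * (star q) ^ j),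
      Finset.sum_range_succ' (fun j => ((Nat.choose (m + 1 + j) (m + 1) *
        Nat.choose (m + 1 + n - j) (m + 1) : ℕ) : Quaternion ℝ) * q ^ (n - j) * (star q) ^ j)]
  rw [eq_sub_iff_add_eq, add_right_comm]
  congr 1
  · rw [← Finset.sum_add_distrib]
    refine Finset.sum_congr rfl fun j hj => ?_
    have e1 : n - (j + 1) = n - 1 - j := by omega
    have e2 : m + 1 + n - (j + 1) = m + n - j := by omega
    have e3 : m + (j + 1) = m + 1 + j := by omega
    have e4 : m + 1 + (j + 1) = (m + 1 + j) + 1 := by omega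
    rw [e1, e2, e3, e4, Nat.choose_succ_succ (m + 1 + j) m, Nat.succ_eq_add_one]
    push_cast
    noncomm_ring
  · norm_num
end

section
/- Let A be a complex Banach algebra with unit, let a, b ∈ A commute (a·b = b·a), and let s ∈ ℂ satisfy ‖a‖ < |s| and ‖b‖ < |s|. Then the element Q := s²·1 − s·(a+b) + a·b is invertible in A, and for every integer ℓ ≥ 1 the series Σ_{k=2ℓ−1}^{∞} s^{−(k+1)} · H_ℓ^k(a,b) converges absolutely in A and its sum equals (Q⁻¹)^ℓ, where H_ℓ^k(a,b) := Σ_{j=0}^{k−2ℓ+1} C(ℓ+j−1, ℓ−1)·C(k−ℓ−j, ℓ−1)·a^{k−2ℓ+1−j}·b^j. (Proposition 6.9 of the paper: Q_{c,s}^{−ℓ}(T) = Σ_{k=2ℓ−1}^{∞} H_ℓ^k(T)·s^{−k−1} for a bounded paravector operator T with commuting components and ‖T‖ < |s|; here T, T̄ are the commuting elements a, b and s, which lies in a slice ℂ_I and commutes with the operators, is a complex scalar.) -/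
open Finset Filter

section Aux

variable {A : Type*} [NormedRing A] [NormedAlgebra ℂ A] [CompleteSpace A]

omit [NormedAlgebra ℂ A] [CompleteSpace A] in
lemma my_summable_norm_choose (m : ℕ) {x : A} (hx : ‖x‖ < 1) :
    Summable fun n : ℕ => ‖((n + m).choose m : A) * x ^ n‖ := by
  apply summable_norm_mul_geometric_of_norm_lt_one (k := m) hx
  apply Asymptotics.isBigO_iff.2 ⟨2 ^ m, ?_⟩
  filter_upwards [Ioi_mem_atTop m] with n (hn : m < n)
  simp only [Real.norm_eq_abs, Nat.abs_cast, Nat.cast_pow, norm_pow]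
  norm_cast
  calc (n + m).choose m
    _ ≤ (2 * n).choose m := Nat.choose_le_choose m (by omega)
    _ ≤ (2 * n) ^ m := Nat.choose_le_pow _ _
    _ = 2 ^ m * n ^ m := Nat.mul_pow 2 n m

omit [CompleteSpace A] in
lemma my_natCast_mul_eq_smul (N : ℕ) (x : A) : (N : A) * x = (N : ℂ) • x := by
  rw [← nsmul_eq_mul, ← Nat.cast_smul_eq_nsmul ℂ]

end Aux

set_option maxHeartbeats 1000000 in
/-- **Proposition 6.9.** Let `A` be a complex unital Banach algebra, let `a b ∈ A` commute and
let `s ∈ ℂ` satisfy `‖a‖ < |s|` and `‖b‖ < |s|`. Then `Q = s²·1 - s·(a+b) + a·b` is invertible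
and `Q^{-ℓ} = ∑_{k=2ℓ-1}^∞ s^{-k-1} H_ℓ^k(a,b)`, where
`H_ℓ^k(a,b) = ∑_{j=0}^{k-2ℓ+1} C(ℓ+j-1,ℓ-1) C(k-ℓ-j,ℓ-1) a^{k-2ℓ+1-j} b^j`
(terms with `k < 2ℓ-1` vanish), the series converging absolutely. -/
theorem Qcs_inv_pow_series_operator (A : Type*) [NormedRing A] [NormedAlgebra ℂ A]
    [CompleteSpace A] (a b : A) (hab : a * b = b * a) (s : ℂ)
    (ha : ‖a‖ < ‖s‖) (hb : ‖b‖ < ‖s‖) (ℓ : ℕ) (hℓ : 1 ≤ ℓ) :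
    IsUnit (algebraMap ℂ A (s ^ 2) - algebraMap ℂ A s * (a + b) + a * b) ∧
    Summable (fun k : ℕ => ‖(s⁻¹) ^ (k + 1) •
      ∑ j ∈ Finset.range (k + 2 - 2 * ℓ),
        ((Nat.choose (ℓ - 1 + j) (ℓ - 1) * Nat.choose (k - ℓ - j) (ℓ - 1) : ℕ) : A) *
          a ^ (k + 1 - 2 * ℓ - j) * b ^ j‖) ∧
    ∑' k : ℕ, (s⁻¹) ^ (k + 1) •
      ∑ j ∈ Finset.range (k + 2 - 2 * ℓ),
        ((Nat.choose (ℓ - 1 + j) (ℓ - 1) * Nat.choose (k - ℓ - j) (ℓ - 1) : ℕ) : A) *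
          a ^ (k + 1 - 2 * ℓ - j) * b ^ j =
      Ring.inverse (algebraMap ℂ A (s ^ 2) - algebraMap ℂ A s * (a + b) + a * b) ^ ℓ := by
  have hs0 : s ≠ 0 := by
    rintro rfl
    simp only [norm_zero] at ha
    exact (norm_nonneg a).not_gt ha
  have hspos : (0 : ℝ) < ‖s‖ := norm_pos_iff.2 hs0
  set c : A := s⁻¹ • a with hc_def
  set d : A := s⁻¹ • b with hd_def
  have hc : ‖c‖ < 1 := by
    rw [hc_def, norm_smul, norm_inv, ← div_eq_inv_mul]
    exact (div_lt_one hspos).2 ha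
  have hd : ‖d‖ < 1 := by
    rw [hd_def, norm_smul, norm_inv, ← div_eq_inv_mul]
    exact (div_lt_one hspos).2 hb
  -- factorization
  have hQ : algebraMap ℂ A (s ^ 2) - algebraMap ℂ A s * (a + b) + a * b
      = (s ^ 2) • ((1 - c) * (1 - d)) := by
    have h1 : (s ^ 2) • (c : A) = s • a := by
      rw [hc_def, smul_smul]; congr 1; field_simp
    have h2 : (s ^ 2) • (d : A) = s • b := by
      rw [hd_def, smul_smul]; congr 1; field_simp
    have h3 : (s ^ 2) • (c * d) = a * b := by
      rw [hc_def, hd_def, smul_mul_assoc, mul_smul_comm, smul_smul, smul_smul]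
      rw [show s ^ 2 * s⁻¹ * s⁻¹ = 1 by field_simp, one_smul]
    rw [mul_one_sub, sub_mul, one_mul, smul_sub, smul_sub, smul_sub, h1, h2, h3,
      Algebra.algebraMap_eq_smul_one, ← Algebra.smul_def, smul_add]
    abel
  -- units
  have hu1 : IsUnit ((1 : A) - c) := (Units.oneSub c hc).isUnit
  have hu2 : IsUnit ((1 : A) - d) := (Units.oneSub d hd).isUnit
  have hQu : IsUnit (algebraMap ℂ A (s ^ 2) - algebraMap ℂ A s * (a + b) + a * b) := by
    rw [hQ, Algebra.smul_def]
    exact ((RingHom.isUnit_map _ (isUnit_iff_ne_zero.2 (pow_ne_zero 2 hs0)))).mul (hu1.mul hu2)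
  -- commuting facts
  have hcd : Commute c d := by
    show c * d = d * c
    rw [hc_def, hd_def, smul_mul_assoc, mul_smul_comm, smul_mul_assoc, mul_smul_comm, hab]
  have hcomm : Commute ((1:A) - c) ((1:A) - d) :=
    (Commute.one_left _).sub_left ((Commute.one_right c).sub_right hcd)
  -- the two basic series
  have hfs : Summable fun n : ℕ => ‖((n + (ℓ - 1)).choose (ℓ - 1) : A) * c ^ n‖ :=
    my_summable_norm_choose (ℓ - 1) hc
  have hgs : Summable fun n : ℕ => ‖((n + (ℓ - 1)).choose (ℓ - 1) : A) * d ^ n‖ :=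
    my_summable_norm_choose (ℓ - 1) hd
  have hf : HasSum (fun n : ℕ => ((n + (ℓ - 1)).choose (ℓ - 1) : A) * c ^ n)
      (Ring.inverse ((1:A) - c) ^ ℓ) := by
    have := hasSum_choose_mul_geometric_of_norm_lt_one' (ℓ - 1) hc
    rwa [Nat.sub_add_cancel hℓ] at this
  have hg : HasSum (fun n : ℕ => ((n + (ℓ - 1)).choose (ℓ - 1) : A) * d ^ n)
      (Ring.inverse ((1:A) - d) ^ ℓ) := by
    have := hasSum_choose_mul_geometric_of_norm_lt_one' (ℓ - 1) hd
    rwa [Nat.sub_add_cancel hℓ] at this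
  -- Cauchy product
  have hFs := summable_norm_sum_mul_antidiagonal_of_summable_norm hfs hgs
  have hFsum := tsum_mul_tsum_eq_tsum_sum_antidiagonal_of_summable_norm hfs hgs
  rw [hf.tsum_eq, hg.tsum_eq] at hFsum
  -- the key index shift
  have key : ∀ n : ℕ,
      (s⁻¹) ^ (n + (2 * ℓ - 1) + 1) • ∑ j ∈ Finset.range (n + (2 * ℓ - 1) + 2 - 2 * ℓ),
        ((Nat.choose (ℓ - 1 + j) (ℓ - 1) * Nat.choose ((n + (2 * ℓ - 1)) - ℓ - j) (ℓ - 1)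
          : ℕ) : A) * a ^ (n + (2 * ℓ - 1) + 1 - 2 * ℓ - j) * b ^ j
      = (s⁻¹) ^ (2 * ℓ) • ∑ kl ∈ Finset.HasAntidiagonal.antidiagonal n,
          (((kl.1 + (ℓ - 1)).choose (ℓ - 1) : A) * c ^ kl.1) *
            (((kl.2 + (ℓ - 1)).choose (ℓ - 1) : A) * d ^ kl.2) := by
    intro n
    rw [Finset.Nat.sum_antidiagonal_eq_sum_range_succ_mk,
      show n + (2 * ℓ - 1) + 2 - 2 * ℓ = n + 1 by omega,
      show n + (2 * ℓ - 1) + 1 = n + 2 * ℓ by omega]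
    conv_lhs => rw [← Finset.sum_range_reflect]
    rw [Finset.smul_sum, Finset.smul_sum]
    refine Finset.sum_congr rfl fun j hj => ?_
    have hj' : j ≤ n := Nat.lt_succ_iff.mp (Finset.mem_range.1 hj)
    rw [show n + 1 - 1 - j = n - j by omega,
      show ℓ - 1 + (n - j) = (n - j) + (ℓ - 1) by omega,
      show n + (2 * ℓ - 1) - ℓ - (n - j) = j + (ℓ - 1) by omega,
      show n + 2 * ℓ - 2 * ℓ - (n - j) = j by omega,
      Nat.mul_comm ((n - j + (ℓ - 1)).choose (ℓ - 1)) ((j + (ℓ - 1)).choose (ℓ - 1))]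
    simp only [hc_def, hd_def, Nat.cast_mul, my_natCast_mul_eq_smul, smul_pow,
      smul_mul_assoc, mul_smul_comm, smul_smul]
    congr 1
    simp only [smul_eq_mul]
    rw [show n + 2 * ℓ = 2 * ℓ + j + (n - j) by omega, pow_add, pow_add]
    ring
  -- vanishing of the first terms
  have hT0 : ∀ k, k < 2 * ℓ - 1 →
      (s⁻¹) ^ (k + 1) • ∑ j ∈ Finset.range (k + 2 - 2 * ℓ),
        ((Nat.choose (ℓ - 1 + j) (ℓ - 1) * Nat.choose (k - ℓ - j) (ℓ - 1) : ℕ) : A) *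
          a ^ (k + 1 - 2 * ℓ - j) * b ^ j = 0 := by
    intro k hk
    rw [show k + 2 - 2 * ℓ = 0 by omega]
    simp
  -- summability
  have hTnorm : Summable (fun k : ℕ => ‖(s⁻¹) ^ (k + 1) •
      ∑ j ∈ Finset.range (k + 2 - 2 * ℓ),
        ((Nat.choose (ℓ - 1 + j) (ℓ - 1) * Nat.choose (k - ℓ - j) (ℓ - 1) : ℕ) : A) *
          a ^ (k + 1 - 2 * ℓ - j) * b ^ j‖) := by
    have h : Summable (fun n : ℕ => ‖(s⁻¹) ^ (n + (2 * ℓ - 1) + 1) •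
        ∑ j ∈ Finset.range (n + (2 * ℓ - 1) + 2 - 2 * ℓ),
          ((Nat.choose (ℓ - 1 + j) (ℓ - 1) *
            Nat.choose ((n + (2 * ℓ - 1)) - ℓ - j) (ℓ - 1) : ℕ) : A) *
            a ^ (n + (2 * ℓ - 1) + 1 - 2 * ℓ - j) * b ^ j‖) :=
      (hFs.mul_left ‖(s⁻¹ : ℂ) ^ (2 * ℓ)‖).congr fun n => by rw [key n, norm_smul]
    exact (summable_nat_add_iff (2 * ℓ - 1)).mp h
  refine ⟨hQu, hTnorm, ?_⟩
  -- compute the sum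
  have hT : Summable (fun k : ℕ => (s⁻¹) ^ (k + 1) •
      ∑ j ∈ Finset.range (k + 2 - 2 * ℓ),
        ((Nat.choose (ℓ - 1 + j) (ℓ - 1) * Nat.choose (k - ℓ - j) (ℓ - 1) : ℕ) : A) *
          a ^ (k + 1 - 2 * ℓ - j) * b ^ j) := hTnorm.of_norm
  rw [← Summable.sum_add_tsum_nat_add (2 * ℓ - 1) hT,
    Finset.sum_eq_zero fun i hi => hT0 i (Finset.mem_range.1 hi), zero_add]
  have hstep : ∑' n : ℕ, (s⁻¹) ^ (n + (2 * ℓ - 1) + 1) •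
      ∑ j ∈ Finset.range (n + (2 * ℓ - 1) + 2 - 2 * ℓ),
        ((Nat.choose (ℓ - 1 + j) (ℓ - 1) *
          Nat.choose ((n + (2 * ℓ - 1)) - ℓ - j) (ℓ - 1) : ℕ) : A) *
          a ^ (n + (2 * ℓ - 1) + 1 - 2 * ℓ - j) * b ^ j
      = (s⁻¹) ^ (2 * ℓ) •
        (Ring.inverse ((1:A) - c) ^ ℓ * Ring.inverse ((1:A) - d) ^ ℓ) := by
    calc _ = ∑' n : ℕ, (s⁻¹) ^ (2 * ℓ) • ∑ kl ∈ Finset.HasAntidiagonal.antidiagonal n,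
          (((kl.1 + (ℓ - 1)).choose (ℓ - 1) : A) * c ^ kl.1) *
            (((kl.2 + (ℓ - 1)).choose (ℓ - 1) : A) * d ^ kl.2) := tsum_congr key
      _ = _ := by rw [(hFs.of_norm.hasSum.const_smul _).tsum_eq, ← hFsum]
  rw [hstep]
  -- final algebraic identity
  have hV : (s⁻¹) ^ (2 * ℓ) • (Ring.inverse ((1:A) - c) ^ ℓ * Ring.inverse ((1:A) - d) ^ ℓ)
      * (algebraMap ℂ A (s ^ 2) - algebraMap ℂ A s * (a + b) + a * b) ^ ℓ = 1 := by
    have hR2c : Commute (Ring.inverse ((1:A) - d)) ((1:A) - c) := by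
      rw [← hu2.unit_spec, Ring.inverse_unit]
      exact Commute.units_inv_left (by rw [hu2.unit_spec]; exact hcomm.symm)
    have hC1 : Commute (Ring.inverse ((1:A) - c)) ((1:A) - c) := by
      rw [← hu1.unit_spec, Ring.inverse_unit]
      exact Commute.units_inv_left (Commute.refl _)
    have hC2 : Commute (Ring.inverse ((1:A) - d)) ((1:A) - d) := by
      rw [← hu2.unit_spec, Ring.inverse_unit]
      exact Commute.units_inv_left (Commute.refl _)
    rw [hQ, smul_pow, hcomm.mul_pow, smul_mul_assoc, mul_smul_comm, smul_smul,
      show (s⁻¹) ^ (2 * ℓ) * (s ^ 2) ^ ℓ = 1 by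
        rw [pow_mul, ← mul_pow, show s⁻¹ ^ 2 * s ^ 2 = 1 by field_simp, one_pow],
      one_smul]
    calc Ring.inverse ((1:A) - c) ^ ℓ * Ring.inverse ((1:A) - d) ^ ℓ *
          (((1:A) - c) ^ ℓ * ((1:A) - d) ^ ℓ)
        = Ring.inverse ((1:A) - c) ^ ℓ * (Ring.inverse ((1:A) - d) ^ ℓ * ((1:A) - c) ^ ℓ) *
            ((1:A) - d) ^ ℓ := by rw [mul_assoc, mul_assoc, mul_assoc]
      _ = Ring.inverse ((1:A) - c) ^ ℓ * (((1:A) - c) ^ ℓ * Ring.inverse ((1:A) - d) ^ ℓ) *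
            ((1:A) - d) ^ ℓ := by rw [(hR2c.pow_pow ℓ ℓ).eq]
      _ = (Ring.inverse ((1:A) - c) ^ ℓ * ((1:A) - c) ^ ℓ) *
            (Ring.inverse ((1:A) - d) ^ ℓ * ((1:A) - d) ^ ℓ) := by
          rw [← mul_assoc, mul_assoc _ _ (Ring.inverse ((1:A) - d) ^ ℓ), ← mul_assoc, mul_assoc]
      _ = 1 := by
          rw [← hC1.mul_pow, ← hC2.mul_pow, Ring.inverse_mul_cancel _ hu1,
            Ring.inverse_mul_cancel _ hu2]
          simp
  rw [← hQu.unit_spec, Ring.inverse_unit, ← Units.val_pow_eq_pow_val, inv_pow hQu.unit ℓ]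
  refine (Units.inv_eq_of_mul_eq_one_left (u := hQu.unit ^ ℓ) ?_).symm
  rw [Units.val_pow_eq_pow_val, hQu.unit_spec]
  exact hV
end

section
/- Let ℓ ≥ 1 and k ≥ 1 be integers, and let x₀, v be real numbers with x₀² + v² ≠ 0. Then the (k−1)-st derivative at x₀ of the function t ↦ (t² + v²)^{−ℓ} (from ℝ to ℝ) equals (k−1)!·(−1)^{k+1}·h·(x₀² + v²)^{−(k+ℓ−1)}, where h is the real number h = Re( Σ_{j=0}^{k−1} C(ℓ+j−1, ℓ−1)·C(k+ℓ−2−j, ℓ−1)·(x₀+iv)^{k−1−j}·(x₀−iv)^{j} ) computed in ℂ. (Proposition 5.4 of the paper: ∂_{x₀}^{k−1}(|x|^{−2ℓ}) = (k−1)!·(−1)^{k+1}·H_ℓ^{k−2+2ℓ}(x)·|x|^{−2k−2ℓ+2} for x ∈ ℝ^{n+1}∖{0}, written with x₀ = Re(x) and v = |x̱|.) -/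
open Finset Complex

/-- binomial coefficient `C(m+j, m)` -/
def Hd (m j : ℕ) : ℕ := (m + j).choose m

lemma Hd_succ (m j : ℕ) : (m + 1 + j) * Hd m j = (j + 1) * Hd m (j + 1) := by
  have h := Nat.add_one_mul_choose_eq (m + j) j
  have h1 : (m + j).choose j = Hd m j := by
    rw [Hd, ← Nat.choose_symm (by omega : m ≤ m + j)]
    congr 1; omega
  have h2 : (m + j + 1).choose (j + 1) = Hd m (j + 1) := by
    rw [Hd, ← Nat.choose_symm (by omega : m ≤ m + (j+1))]
    congr 1
    omega
  rw [h1, h2] at h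
  rw [show m + j + 1 = m + 1 + j by omega] at h
  rw [h]; ring

lemma hasDerivAt_term (a b : ℕ) (w z : ℂ) (hX : z + w ≠ 0) (hY : z - w ≠ 0) :
    HasDerivAt (fun z : ℂ => ((z + w) ^ (a + 1) * (z - w) ^ (b + 1))⁻¹)
      (-((((a : ℂ) + 1) * ((z + w) ^ (a + 2) * (z - w) ^ (b + 1))⁻¹) +
        (((b : ℂ) + 1) * ((z + w) ^ (a + 1) * (z - w) ^ (b + 2))⁻¹))) z := by
  have h1 : HasDerivAt (fun z : ℂ => z + w) 1 z := (hasDerivAt_id z).add_const w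
  have h2 : HasDerivAt (fun z : ℂ => z - w) 1 z := (hasDerivAt_id z).sub_const w
  have h := ((h1.pow (a + 1)).mul (h2.pow (b + 1))).inv
    (mul_ne_zero (pow_ne_zero _ hX) (pow_ne_zero _ hY))
  refine h.congr_deriv ?_
  simp only [Nat.add_sub_cancel, Nat.cast_add, Nat.cast_one, mul_one, Pi.pow_apply, Pi.mul_apply]
  field_simp
  ring

/-- the sum appearing in the `n`-th derivative (with `ℓ = m+1`) -/
noncomputable def Hs (m n : ℕ) (v : ℝ) (z : ℂ) : ℂ :=
  ∑ j ∈ range (n + 1), ((Hd m j * Hd m (n - j) : ℕ) : ℂ) *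
    ((z + v * I) ^ (m + 1 + (n - j)) * (z - v * I) ^ (m + 1 + j))⁻¹

lemma sum_step (m n : ℕ) (X Y : ℂ) :
    ∑ j ∈ range (n + 1), ((Hd m j * Hd m (n - j) : ℕ) : ℂ) *
      ((((m + (n - j) : ℕ) : ℂ) + 1) * (X ^ (m + (n - j) + 2) * Y ^ (m + 1 + j))⁻¹ +
        (((m + j : ℕ) : ℂ) + 1) * (X ^ (m + 1 + (n - j)) * Y ^ (m + j + 2))⁻¹) =
    ((n : ℂ) + 1) * ∑ j ∈ range (n + 2), ((Hd m j * Hd m (n + 1 - j) : ℕ) : ℂ) *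
      (X ^ (m + 1 + (n + 1 - j)) * Y ^ (m + 1 + j))⁻¹ := by
  have key : ∀ j ∈ range (n + 2),
      ((n : ℂ) + 1) * (((Hd m j * Hd m (n + 1 - j) : ℕ) : ℂ) *
        (X ^ (m + 1 + (n + 1 - j)) * Y ^ (m + 1 + j))⁻¹) =
      ((((n + 1 - j) * (Hd m j * Hd m (n + 1 - j)) : ℕ) : ℂ) *
        (X ^ (m + 1 + (n + 1 - j)) * Y ^ (m + 1 + j))⁻¹) +
      (((j * (Hd m j * Hd m (n + 1 - j)) : ℕ) : ℂ) *
        (X ^ (m + 1 + (n + 1 - j)) * Y ^ (m + 1 + j))⁻¹) := by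
    intro j hj
    rw [mem_range] at hj
    have hn : (n + 1 - j) * (Hd m j * Hd m (n + 1 - j)) + j * (Hd m j * Hd m (n + 1 - j)) =
        (n + 1) * (Hd m j * Hd m (n + 1 - j)) := by
      rw [← add_mul]; congr 1; omega
    rw [← add_mul, ← Nat.cast_add, hn]
    push_cast; ring
  rw [mul_sum, Finset.sum_congr rfl key, Finset.sum_add_distrib]
  have e1 : ∑ j ∈ range (n + 2), (((n + 1 - j) * (Hd m j * Hd m (n + 1 - j)) : ℕ) : ℂ) *
      (X ^ (m + 1 + (n + 1 - j)) * Y ^ (m + 1 + j))⁻¹ =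
      ∑ j ∈ range (n + 1), ((Hd m j * Hd m (n - j) : ℕ) : ℂ) *
        ((((m + (n - j) : ℕ) : ℂ) + 1) * (X ^ (m + (n - j) + 2) * Y ^ (m + 1 + j))⁻¹) := by
    rw [Finset.sum_range_succ]
    simp only [Nat.sub_self, Nat.zero_mul, Nat.cast_zero, zero_mul, add_zero]
    refine Finset.sum_congr rfl fun j hj => ?_
    rw [mem_range] at hj
    have h2 := Hd_succ m (n - j)
    have hc : (n + 1 - j) * (Hd m j * Hd m (n + 1 - j)) =
        Hd m j * Hd m (n - j) * (m + (n - j) + 1) := by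
      rw [show n + 1 - j = (n - j) + 1 by omega]
      calc ((n - j) + 1) * (Hd m j * Hd m ((n - j) + 1))
          = Hd m j * (((n - j) + 1) * Hd m ((n - j) + 1)) := by ring
        _ = Hd m j * ((m + 1 + (n - j)) * Hd m (n - j)) := by rw [← h2]
        _ = Hd m j * Hd m (n - j) * (m + (n - j) + 1) := by ring
    rw [hc, show n + 1 - j = (n - j) + 1 by omega,
      show m + 1 + (n - j + 1) = m + (n - j) + 2 by omega]
    push_cast; ring
  have e2 : ∑ j ∈ range (n + 2), ((j * (Hd m j * Hd m (n + 1 - j)) : ℕ) : ℂ) *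
      (X ^ (m + 1 + (n + 1 - j)) * Y ^ (m + 1 + j))⁻¹ =
      ∑ j ∈ range (n + 1), ((Hd m j * Hd m (n - j) : ℕ) : ℂ) *
        ((((m + j : ℕ) : ℂ) + 1) * (X ^ (m + 1 + (n - j)) * Y ^ (m + j + 2))⁻¹) := by
    rw [Finset.sum_range_succ']
    simp only [Nat.zero_mul, Nat.cast_zero, zero_mul, add_zero]
    refine Finset.sum_congr rfl fun j hj => ?_
    rw [mem_range] at hj
    have h2 := Hd_succ m j
    have hc : (j + 1) * (Hd m (j + 1) * Hd m (n + 1 - (j + 1))) =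
        Hd m j * Hd m (n - j) * (m + j + 1) := by
      rw [show n + 1 - (j + 1) = n - j by omega]
      calc (j + 1) * (Hd m (j + 1) * Hd m (n - j))
          = ((j + 1) * Hd m (j + 1)) * Hd m (n - j) := by ring
        _ = ((m + 1 + j) * Hd m j) * Hd m (n - j) := by rw [← h2]
        _ = Hd m j * Hd m (n - j) * (m + j + 1) := by ring
    rw [hc, show n + 1 - (j + 1) = n - j by omega,
      show m + 1 + (j + 1) = m + j + 2 by omega]
    push_cast; ring
  rw [e1, e2, ← Finset.sum_add_distrib]
  exact (Finset.sum_congr rfl fun j hj => by ring).symm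

lemma hasDerivAt_Hs (m n : ℕ) (v : ℝ) (z : ℂ) (hX : z + v * I ≠ 0) (hY : z - v * I ≠ 0) :
    HasDerivAt (Hs m n v) (-(((n : ℂ) + 1) * Hs m (n + 1) v z)) z := by
  have hterm : ∀ j ∈ range (n + 1),
      HasDerivAt (fun z : ℂ => ((Hd m j * Hd m (n - j) : ℕ) : ℂ) *
        ((z + v * I) ^ (m + 1 + (n - j)) * (z - v * I) ^ (m + 1 + j))⁻¹)
      (((Hd m j * Hd m (n - j) : ℕ) : ℂ) *
        (-((((m + (n - j) : ℕ) : ℂ) + 1) *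
            ((z + v * I) ^ (m + (n - j) + 2) * (z - v * I) ^ (m + 1 + j))⁻¹ +
          (((m + j : ℕ) : ℂ) + 1) *
            ((z + v * I) ^ (m + 1 + (n - j)) * (z - v * I) ^ (m + j + 2))⁻¹))) z := by
    intro j hj
    have h := hasDerivAt_term (m + (n - j)) (m + j) (v * I) z hX hY
    rw [show m + (n - j) + 1 = m + 1 + (n - j) by omega,
      show m + j + 1 = m + 1 + j by omega] at h
    exact h.const_mul _
  have h := HasDerivAt.sum hterm
  have : (∑ j ∈ range (n + 1), ((Hd m j * Hd m (n - j) : ℕ) : ℂ) *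
      (-((((m + (n - j) : ℕ) : ℂ) + 1) *
          ((z + v * I) ^ (m + (n - j) + 2) * (z - v * I) ^ (m + 1 + j))⁻¹ +
        (((m + j : ℕ) : ℂ) + 1) *
          ((z + v * I) ^ (m + 1 + (n - j)) * (z - v * I) ^ (m + j + 2))⁻¹))) =
      -(((n : ℂ) + 1) * Hs m (n + 1) v z) := by
    rw [Hs, ← sum_step m n (z + v * I) (z - v * I)]
    rw [← Finset.sum_neg_distrib]
    exact Finset.sum_congr rfl fun j hj => by ring
  rw [this] at h
  exact h.congr_of_eventuallyEq (Filter.Eventually.of_forall fun y => by rw [Finset.sum_apply]; rfl)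

lemma XY_mul (x v : ℝ) :
    ((x : ℂ) + v * I) * ((x : ℂ) - v * I) = ((x ^ 2 + v ^ 2 : ℝ) : ℂ) := by
  push_cast
  linear_combination (-(v : ℂ) ^ 2) * Complex.I_sq

lemma X_ne (x v : ℝ) (h : x ^ 2 + v ^ 2 ≠ 0) : (x : ℂ) + v * I ≠ 0 := by
  intro h0
  apply h
  have := XY_mul x v
  rw [h0, zero_mul] at this
  exact_mod_cast (Complex.ofReal_eq_zero.mp this.symm)

lemma Y_ne (x v : ℝ) (h : x ^ 2 + v ^ 2 ≠ 0) : (x : ℂ) - v * I ≠ 0 := by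
  intro h0
  apply h
  have := XY_mul x v
  rw [h0, mul_zero] at this
  exact_mod_cast (Complex.ofReal_eq_zero.mp this.symm)

lemma iteratedDeriv_eq_Hs (m n : ℕ) (v : ℝ) :
    ∀ x : ℝ, x ^ 2 + v ^ 2 ≠ 0 →
    iteratedDeriv n (fun t : ℝ => ((t ^ 2 + v ^ 2) ^ (m + 1))⁻¹) x =
      (-1) ^ n * (n.factorial : ℝ) * (Hs m n v x).re := by
  induction n with
  | zero =>
    intro x hx
    rw [iteratedDeriv_zero]
    have : Hs m 0 v x = (((((x ^ 2 + v ^ 2) ^ (m + 1))⁻¹ : ℝ)) : ℂ) := by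
      rw [Hs]
      rw [Finset.sum_range_one]
      simp only [Nat.sub_zero, Nat.add_zero, Hd, Nat.choose_self, Nat.mul_one, Nat.cast_one,
        one_mul, Nat.add_zero]
      rw [← mul_pow, XY_mul, ← Complex.ofReal_pow, ← Complex.ofReal_inv]
    rw [this, Complex.ofReal_re]
    simp
  | succ n ih =>
    intro x hx
    rw [iteratedDeriv_succ]
    have hU : IsOpen {t : ℝ | t ^ 2 + v ^ 2 ≠ 0} := by
      have : Continuous fun t : ℝ => t ^ 2 + v ^ 2 := by continuity
      exact (isOpen_compl_singleton.preimage this)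
    have hmem : {t : ℝ | t ^ 2 + v ^ 2 ≠ 0} ∈ nhds x := hU.mem_nhds hx
    have heq : iteratedDeriv n (fun t : ℝ => ((t ^ 2 + v ^ 2) ^ (m + 1))⁻¹) =ᶠ[nhds x]
        fun t => (-1) ^ n * (n.factorial : ℝ) * (Hs m n v t).re :=
      Filter.eventuallyEq_of_mem hmem fun t ht => ih t ht
    rw [heq.deriv_eq]
    have hD : HasDerivAt (fun t : ℝ => (-1) ^ n * (n.factorial : ℝ) * (Hs m n v t).re)
        ((-1) ^ n * (n.factorial : ℝ) * (-(((n : ℂ) + 1) * Hs m (n + 1) v x)).re) x := by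
      exact ((hasDerivAt_Hs m n v x (X_ne x v hx) (Y_ne x v hx)).real_of_complex).const_mul _
    rw [hD.deriv]
    have hre : (-(((n : ℂ) + 1) * Hs m (n + 1) v x)).re =
        -(((n : ℝ) + 1) * (Hs m (n + 1) v x).re) := by
      simp [Complex.mul_re]
    rw [hre, Nat.factorial_succ]
    push_cast
    ring

/-- **Proposition 5.4.** For integers `ℓ ≥ 1`, `k ≥ 1` and reals `x₀, v` with `x₀² + v² ≠ 0`,
the `(k-1)`-st derivative at `x₀` of `t ↦ (t² + v²)^{-ℓ}` equals
`(k-1)! (-1)^{k+1} H_ℓ^{k-2+2ℓ}(x) (x₀² + v²)^{-(k+ℓ-1)}`, where the real number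
`H_ℓ^{k-2+2ℓ}(x)` is computed by substituting `x₀ + iv` for `x` and `x₀ - iv` for `x̄`
and taking the real part. -/
theorem iteratedDeriv_rieszPotential (ℓ k : ℕ) (hℓ : 1 ≤ ℓ) (hk : 1 ≤ k) (x₀ v : ℝ)
    (h : x₀ ^ 2 + v ^ 2 ≠ 0) :
    iteratedDeriv (k - 1) (fun t : ℝ => ((t ^ 2 + v ^ 2) ^ ℓ)⁻¹) x₀ =
      (Nat.factorial (k - 1) : ℝ) * (-1) ^ (k + 1) *
        (∑ j ∈ Finset.range k,
          ((Nat.choose (ℓ - 1 + j) (ℓ - 1) * Nat.choose (k + ℓ - 2 - j) (ℓ - 1) : ℕ) : ℂ) *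
            ((x₀ : ℂ) + (v : ℂ) * Complex.I) ^ (k - 1 - j) *
            ((x₀ : ℂ) - (v : ℂ) * Complex.I) ^ j).re *
        ((x₀ ^ 2 + v ^ 2) ^ (k + ℓ - 1))⁻¹ := by
  obtain ⟨m, rfl⟩ : ∃ m, ℓ = m + 1 := ⟨ℓ - 1, by omega⟩
  obtain ⟨n, rfl⟩ : ∃ n, k = n + 1 := ⟨k - 1, by omega⟩
  rw [show n + 1 - 1 = n from rfl, iteratedDeriv_eq_Hs m n v x₀ h]
  have hX := X_ne x₀ v h
  have hY := Y_ne x₀ v h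
  set X := (x₀ : ℂ) + v * I with hXdef
  set Y := (x₀ : ℂ) - v * I with hYdef
  have hXY : X * Y = ((x₀ ^ 2 + v ^ 2 : ℝ) : ℂ) := XY_mul x₀ v
  -- rewrite Hs in factored form
  have hterm : ∀ j ∈ range (n + 1), ((Hd m j * Hd m (n - j) : ℕ) : ℂ) *
      (X ^ (m + 1 + (n - j)) * Y ^ (m + 1 + j))⁻¹ =
      (((Hd m j * Hd m (n - j) : ℕ) : ℂ) * X ^ j * Y ^ (n - j)) *
        ((X * Y) ^ (n + m + 1))⁻¹ := by
    intro j hj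
    rw [mem_range] at hj
    have hx2 : X ^ (n + m + 1) = X ^ (m + 1 + (n - j)) * X ^ j := by
      rw [← pow_add]; congr 1; omega
    have hy2 : Y ^ (n + m + 1) = Y ^ (m + 1 + j) * Y ^ (n - j) := by
      rw [← pow_add]; congr 1; omega
    rw [mul_pow, hx2, hy2]
    field_simp
  have hHs : Hs m n v x₀ =
      (∑ j ∈ range (n + 1), ((Hd m j * Hd m (n - j) : ℕ) : ℂ) * X ^ j * Y ^ (n - j)) *
        ((((x₀ ^ 2 + v ^ 2) ^ (n + m + 1) : ℝ)) : ℂ)⁻¹ := by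
    rw [Hs, Finset.sum_congr rfl hterm, ← Finset.sum_mul, hXY, ← Complex.ofReal_pow]
  rw [hHs]
  -- move the real scalar out of the real part
  rw [← Complex.ofReal_inv]
  rw [Complex.mul_re, Complex.ofReal_re, Complex.ofReal_im, mul_zero, sub_zero]
  -- identify the two sums via reflection
  have hsum : (∑ j ∈ Finset.range (n + 1),
      ((Nat.choose (m + 1 - 1 + j) (m + 1 - 1) *
        Nat.choose (n + 1 + (m + 1) - 2 - j) (m + 1 - 1) : ℕ) : ℂ) *
        X ^ (n - j) * Y ^ j) =
      ∑ j ∈ range (n + 1), ((Hd m j * Hd m (n - j) : ℕ) : ℂ) * X ^ j * Y ^ (n - j) := by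
    rw [← Finset.sum_range_reflect]
    refine Finset.sum_congr rfl fun j hj => ?_
    rw [mem_range] at hj
    have e1 : m + 1 - 1 + (n + 1 - 1 - j) = m + (n - j) := by omega
    have e2 : n + 1 + (m + 1) - 2 - (n + 1 - 1 - j) = m + j := by omega
    have e3 : n - (n + 1 - 1 - j) = j := by omega
    have e4 : n + 1 - 1 - j = n - j := by omega
    rw [e1, e2, e3, e4]
    simp only [Hd]
    push_cast
    ring
  rw [hsum]
  rw [show n + 1 + (m + 1) - 1 = n + m + 1 by omega]
  push_cast [Nat.factorial]
  ring
end

section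
/- Let ℓ ≥ 1 and m ≥ 0 be integers, and let x₀, v be real numbers with r² := x₀² + v² ≠ 0. Then Re( Σ_{j=0}^{2m} C(ℓ+j−1, ℓ−1)·C(2m+ℓ−1−j, ℓ−1)·(x₀+iv)^{2m−j}·(x₀−iv)^{j} ) = ((−1)^m·√π·Γ(m+ℓ)·r^{2m} / (Γ(ℓ)·Γ(m+1/2))) · P_m^{(−1/2, (2ℓ−1)/2)}(1 − 2x₀²/r²), where Γ is the real Gamma function and the Jacobi polynomial P_n^{(α,β)} is given by its explicit formula P_n^{(α,β)}(z) = (Γ(α+n+1)/(n!·Γ(n+α+β+1)))·Σ_{ν=0}^{n} C(n,ν)·(Γ(n+α+β+ν+1)/Γ(α+ν+1))·((z−1)/2)^ν. (Proposition 5.5 of the paper, odd case: H_ℓ^{2m+2ℓ−1}(x) expressed through Jacobi polynomials.) -/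
open Finset

section Aux

lemma keyA (j : ℕ) : ∀ b q : ℕ,
    ∑ k ∈ range (j+1), (-1:ℤ)^k * (j.choose k) * ((b+k).choose (j+q))
      = (-1)^j * (b.choose q) := by
  induction j with
  | zero => intro b q; simp
  | succ j ih =>
    intro b q
    have hidx : j + 1 + q = j + (q+1) := by omega
    rw [hidx]
    have h1 : ∑ k ∈ range (j+2), (-1:ℤ)^k * ((j+1).choose k) * ((b+k).choose (j+(q+1)))
        = ∑ k ∈ range (j+2), (-1:ℤ)^k * (j.choose k) * ((b+k).choose (j+(q+1)))
          + ∑ k ∈ range (j+1), (-1:ℤ)^(k+1) * (j.choose k) * ((b+(k+1)).choose (j+(q+1))) := by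
      rw [Finset.sum_range_succ' (fun k => (-1:ℤ)^k * (j.choose k) * ((b+k).choose (j+(q+1)))) (j+1),
          Finset.sum_range_succ' (fun k => (-1:ℤ)^k * ((j+1).choose k) * ((b+k).choose (j+(q+1)))) (j+1)]
      simp only [Nat.choose_succ_succ, Nat.cast_add, add_mul, mul_add, Finset.sum_add_distrib,
        Nat.choose_zero_right]
      ring
    have h2 : ∑ k ∈ range (j+2), (-1:ℤ)^k * (j.choose k) * ((b+k).choose (j+(q+1)))
        = ∑ k ∈ range (j+1), (-1:ℤ)^k * (j.choose k) * ((b+k).choose (j+(q+1))) := by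
      rw [Finset.sum_range_succ]
      simp [Nat.choose_succ_self]
    have h3 : ∑ k ∈ range (j+1), (-1:ℤ)^(k+1) * (j.choose k) * ((b+(k+1)).choose (j+(q+1)))
        = -∑ k ∈ range (j+1), (-1:ℤ)^k * (j.choose k) * (((b+1)+k).choose (j+(q+1))) := by
      rw [← Finset.sum_neg_distrib]
      apply Finset.sum_congr rfl
      intro k _
      have hb : b + (k+1) = (b+1) + k := by omega
      rw [hb]
      ring
    rw [h1, h2, h3, ih b (q+1), ih (b+1) (q+1)]
    rw [Nat.choose_succ_succ b q]
    push_cast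
    ring

lemma keyB (j q M : ℕ) (hj : j ≤ M) :
    ∑ k ∈ range (j+1), (-1:ℤ)^k * (j.choose k) * ((M-k).choose (j+q))
      = ((M-j).choose q) := by
  have hrefl := Finset.sum_range_reflect
    (fun k => (-1:ℤ)^k * (j.choose k) * ((M-k).choose (j+q))) (j+1)
  rw [← hrefl]
  have : ∀ k ∈ range (j+1),
      (-1:ℤ)^(j+1-1-k) * (j.choose (j+1-1-k)) * ((M-(j+1-1-k)).choose (j+q))
        = (-1:ℤ)^j * ((-1:ℤ)^k * (j.choose k) * (((M-j)+k).choose (j+q))) := by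
    intro k hk
    have hk' : k ≤ j := by simpa using Nat.lt_succ_iff.mp (Finset.mem_range.mp hk)
    have e1 : j + 1 - 1 - k = j - k := by omega
    have e2 : M - (j-k) = (M-j) + k := by omega
    have e3 : j.choose (j-k) = j.choose k := by
      rw [Nat.choose_symm hk']
    have e4 : (-1:ℤ)^(j-k) = (-1)^j * (-1)^k := by
      rw [← pow_add]
      have hjk : j + k = (j - k) + 2*k := by omega
      rw [hjk, pow_add, pow_mul]
      norm_num
    rw [e1, e2, e3, e4]
    ring
  rw [Finset.sum_congr rfl this, ← Finset.mul_sum, keyA j (M-j) q]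
  rw [← mul_assoc, ← mul_pow]
  norm_num

lemma pointwise (L m j k : ℕ) (hj : j ≤ 2*m) (hk : k ≤ m) :
    ((2*m-k).choose k * ((2*m+L-k).choose L)) * (if k ≤ j then (2*m-2*k).choose (j-k) else 0)
      = (L+j).choose L * (j.choose k * ((2*m+L-k).choose (j+L))) := by
  by_cases hkj : k ≤ j
  · by_cases hrange : j ≤ 2*m - k
    · -- main case
      rw [if_pos hkj]
      have f3 : (2*m-2*k).choose (j-k) * (j-k).factorial * (2*m-k-j).factorial
          = (2*m-2*k).factorial := by
        have h := Nat.choose_mul_factorial_mul_factorial (show j-k ≤ 2*m-2*k by omega)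
        have e : 2*m-2*k - (j-k) = 2*m-k-j := by omega
        rwa [e] at h
      have f1 : (2*m-k).choose k * k.factorial * (2*m-2*k).factorial
          = (2*m-k).factorial := by
        have h := Nat.choose_mul_factorial_mul_factorial (show k ≤ 2*m-k by omega)
        have e : 2*m-k - k = 2*m-2*k := by omega
        rwa [e] at h
      have f2 : (2*m+L-k).choose L * L.factorial * (2*m-k).factorial
          = (2*m+L-k).factorial := by
        have h := Nat.choose_mul_factorial_mul_factorial (show L ≤ 2*m+L-k by omega)
        have e : 2*m+L-k - L = 2*m-k := by omega
        rwa [e] at h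
      have f5 : j.choose k * k.factorial * (j-k).factorial = j.factorial :=
        Nat.choose_mul_factorial_mul_factorial hkj
      have f4 : (L+j).choose L * L.factorial * j.factorial = (L+j).factorial := by
        have h := Nat.choose_mul_factorial_mul_factorial (show L ≤ L+j by omega)
        have e : L+j - L = j := by omega
        rwa [e] at h
      have f6 : (2*m+L-k).choose (j+L) * (j+L).factorial * (2*m-k-j).factorial
          = (2*m+L-k).factorial := by
        have h := Nat.choose_mul_factorial_mul_factorial (show j+L ≤ 2*m+L-k by omega)
        have e : 2*m+L-k - (j+L) = 2*m-k-j := by omega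
        rwa [e] at h
      apply Nat.eq_of_mul_eq_mul_right
        (show 0 < L.factorial * (k.factorial * ((j-k).factorial * (2*m-k-j).factorial)) by
          positivity)
      have hLHS : ((2*m-k).choose k * ((2*m+L-k).choose L)) * ((2*m-2*k).choose (j-k))
            * (L.factorial * (k.factorial * ((j-k).factorial * (2*m-k-j).factorial)))
          = (2*m+L-k).choose L * L.factorial *
            ((2*m-k).choose k * k.factorial *
              ((2*m-2*k).choose (j-k) * (j-k).factorial * (2*m-k-j).factorial)) := by
        ring
      have hRHS : (L+j).choose L * (j.choose k * ((2*m+L-k).choose (j+L)))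
            * (L.factorial * (k.factorial * ((j-k).factorial * (2*m-k-j).factorial)))
          = (2*m+L-k).choose (j+L) * ((L+j).choose L * L.factorial *
              (j.choose k * k.factorial * (j-k).factorial)) * (2*m-k-j).factorial := by
        ring
      rw [hLHS, f3, f1, f2, hRHS, f5, f4, Nat.add_comm L j, f6]
    · -- j > 2m-k : both sides vanish
      rw [if_pos hkj]
      have z1 : (2*m-2*k).choose (j-k) = 0 := Nat.choose_eq_zero_of_lt (by omega)
      have z2 : (2*m+L-k).choose (j+L) = 0 := Nat.choose_eq_zero_of_lt (by omega)
      rw [z1, z2]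
      ring
  · rw [if_neg hkj, Nat.choose_eq_zero_of_lt (by omega : j < k)]
    ring

lemma coeff_ident (L m j : ℕ) (hj : j ≤ 2*m) :
    ∑ k ∈ range (m+1), (-1:ℤ)^k * ((2*m-k).choose k * ((2*m+L-k).choose L) : ℕ)
        * (if k ≤ j then ((2*m-2*k).choose (j-k) : ℤ) else 0)
      = ((L+j).choose L : ℤ) * ((2*m+L-j).choose L : ℤ) := by
  have step1 : ∀ k ∈ range (m+1),
      (-1:ℤ)^k * ((2*m-k).choose k * ((2*m+L-k).choose L) : ℕ)
          * (if k ≤ j then ((2*m-2*k).choose (j-k) : ℤ) else 0)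
        = ((L+j).choose L : ℤ) *
            ((-1:ℤ)^k * (j.choose k) * ((2*m+L-k).choose (j+L))) := by
    intro k hk
    have hk' : k ≤ m := by simpa using Nat.lt_succ_iff.mp (Finset.mem_range.mp hk)
    have hp := pointwise L m j k hj hk'
    have hcast : (((2*m-k).choose k * ((2*m+L-k).choose L) : ℕ) : ℤ)
        * (if k ≤ j then ((2*m-2*k).choose (j-k) : ℤ) else 0)
        = ((L+j).choose L : ℤ) * ((j.choose k : ℤ) * ((2*m+L-k).choose (j+L) : ℤ)) := by
      rw [show (if k ≤ j then ((2*m-2*k).choose (j-k) : ℤ) else 0)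
            = ((if k ≤ j then (2*m-2*k).choose (j-k) else 0 : ℕ) : ℤ) by
          split <;> simp]
      exact_mod_cast hp
    calc (-1:ℤ)^k * ((2*m-k).choose k * ((2*m+L-k).choose L) : ℕ)
          * (if k ≤ j then ((2*m-2*k).choose (j-k) : ℤ) else 0)
        = (-1:ℤ)^k * ((((2*m-k).choose k * ((2*m+L-k).choose L) : ℕ) : ℤ)
            * (if k ≤ j then ((2*m-2*k).choose (j-k) : ℤ) else 0)) := by ring
      _ = (-1:ℤ)^k * (((L+j).choose L : ℤ) * ((j.choose k : ℤ)
            * ((2*m+L-k).choose (j+L) : ℤ))) := by rw [hcast]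
      _ = ((L+j).choose L : ℤ) * ((-1:ℤ)^k * (j.choose k) * ((2*m+L-k).choose (j+L))) := by
            ring
  rw [Finset.sum_congr rfl step1, ← Finset.mul_sum]
  have hext : ∑ k ∈ range (m+1), (-1:ℤ)^k * (j.choose k) * ((2*m+L-k).choose (j+L))
      = ∑ k ∈ range (2*m+1), (-1:ℤ)^k * (j.choose k) * ((2*m+L-k).choose (j+L)) := by
    apply Finset.sum_subset
    · exact Finset.range_subset_range.mpr (by omega)
    · intro k hk1 hk2
      have hk3 : m + 1 ≤ k := by
        simp only [Finset.mem_range] at hk1 hk2; omega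
      have hk4 : k ≤ 2*m := by simp only [Finset.mem_range] at hk1; omega
      by_cases hkj : k ≤ j
      · have : (2*m+L-k).choose (j+L) = 0 := Nat.choose_eq_zero_of_lt (by omega)
        simp [this]
      · simp [Nat.choose_eq_zero_of_lt (by omega : j < k)]
  have hshr : ∑ k ∈ range (2*m+1), (-1:ℤ)^k * (j.choose k) * ((2*m+L-k).choose (j+L))
      = ∑ k ∈ range (j+1), (-1:ℤ)^k * (j.choose k) * ((2*m+L-k).choose (j+L)) := by
    symm
    apply Finset.sum_subset
    · exact Finset.range_subset_range.mpr (by omega)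
    · intro k hk1 hk2
      have : j < k := by simp only [Finset.mem_range] at hk1 hk2; omega
      simp [Nat.choose_eq_zero_of_lt this]
  rw [hext, hshr, keyB j L (2*m+L) (by omega)]

lemma expand_term (m k : ℕ) (hk : k ≤ m) (z w : ℂ) :
    (z+w)^(2*m-2*k) * (z*w)^k
      = ∑ j ∈ range (2*m+1),
          (if k ≤ j then ((2*m-2*k).choose (j-k) : ℂ) else 0) * z^(2*m-j) * w^j := by
  have h1 : (z+w)^(2*m-2*k) * (z*w)^k
      = ∑ i ∈ range (2*m-2*k+1), ((2*m-2*k).choose i : ℂ) * z^(2*m-(i+k)) * w^(i+k) := by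
    rw [add_comm z w, add_pow, Finset.sum_mul]
    apply Finset.sum_congr rfl
    intro i hi
    have hi' : i ≤ 2*m-2*k := by simpa using Nat.lt_succ_iff.mp (Finset.mem_range.mp hi)
    have e : 2*m - (i+k) = (2*m-2*k-i) + k := by omega
    rw [e, pow_add, mul_pow]
    ring
  rw [h1]
  have h2 : ∀ i ∈ range (2*m-2*k+1),
      ((2*m-2*k).choose i : ℂ) * z^(2*m-(i+k)) * w^(i+k)
        = (fun j => (if k ≤ j then ((2*m-2*k).choose (j-k) : ℂ) else 0) * z^(2*m-j) * w^j) (k+i) := by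
    intro i hi
    simp only []
    rw [if_pos (by omega : k ≤ k+i)]
    have e1 : k + i - k = i := by omega
    have e2 : i + k = k + i := by omega
    rw [e1, e2]
  rw [Finset.sum_congr rfl h2, show (2*m-2*k+1) = (2*m-k+1) - k by omega,
    ← Finset.sum_Ico_eq_sum_range
    (fun j => (if k ≤ j then ((2*m-2*k).choose (j-k) : ℂ) else 0) * z^(2*m-j) * w^j)]
  apply Finset.sum_subset
  · intro x hx
    simp only [Finset.mem_Ico] at hx
    simp only [Finset.mem_range]
    omega
  · intro x hx1 hx2
    simp only [Finset.mem_range] at hx1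
    simp only [Finset.mem_Ico] at hx2
    by_cases hkx : k ≤ x
    · have : 2*m-2*k < x-k := by omega
      simp [Nat.choose_eq_zero_of_lt this]
    · simp [hkx]

lemma geg (L m : ℕ) (z w : ℂ) :
    ∑ j ∈ range (2*m+1), (((L+j).choose L * ((2*m+L-j).choose L) : ℕ) : ℂ) * z^(2*m-j) * w^j
      = ∑ k ∈ range (m+1), (-1:ℂ)^k * (((2*m-k).choose k * ((2*m+L-k).choose L) : ℕ) : ℂ)
          * ((z+w)^(2*m-2*k) * (z*w)^k) := by
  have h1 : ∀ k ∈ range (m+1),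
      (-1:ℂ)^k * (((2*m-k).choose k * ((2*m+L-k).choose L) : ℕ) : ℂ)
          * ((z+w)^(2*m-2*k) * (z*w)^k)
        = ∑ j ∈ range (2*m+1),
            (-1:ℂ)^k * (((2*m-k).choose k * ((2*m+L-k).choose L) : ℕ) : ℂ)
              * ((if k ≤ j then ((2*m-2*k).choose (j-k) : ℂ) else 0) * z^(2*m-j) * w^j) := by
    intro k hk
    have hk' : k ≤ m := by simpa using Nat.lt_succ_iff.mp (Finset.mem_range.mp hk)
    rw [expand_term m k hk' z w, Finset.mul_sum]
  rw [Finset.sum_congr rfl h1, Finset.sum_comm]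
  apply Finset.sum_congr rfl
  intro j hj
  have hj' : j ≤ 2*m := by simpa using Nat.lt_succ_iff.mp (Finset.mem_range.mp hj)
  have key := coeff_ident L m j hj'
  set S : ℤ := ∑ k ∈ range (m+1), (-1:ℤ)^k * ((2*m-k).choose k * ((2*m+L-k).choose L) : ℕ)
      * (if k ≤ j then ((2*m-2*k).choose (j-k) : ℤ) else 0) with hS
  have hsum : ∑ k ∈ range (m+1),
      (-1:ℂ)^k * (((2*m-k).choose k * ((2*m+L-k).choose L) : ℕ) : ℂ)
        * ((if k ≤ j then ((2*m-2*k).choose (j-k) : ℂ) else 0) * z^(2*m-j) * w^j)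
      = (S : ℂ) * (z^(2*m-j) * w^j) := by
    rw [hS]
    push_cast
    rw [Finset.sum_mul]
    apply Finset.sum_congr rfl
    intro k _
    split <;> ring
  rw [hsum, key]
  push_cast
  ring

lemma Gamma_nat_add_half (n : ℕ) :
    Real.Gamma ((n:ℝ) + 1/2)
      = (2*n).factorial * Real.sqrt Real.pi / (4^n * n.factorial) := by
  induction n with
  | zero =>
    rw [show ((0:ℕ):ℝ) + 1/2 = 1/2 by norm_num, Real.Gamma_one_half_eq]
    simp
  | succ n ih =>
    have h1 : ((n+1:ℕ):ℝ) + 1/2 = ((n:ℝ) + 1/2) + 1 := by push_cast; ring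
    rw [h1, Real.Gamma_add_one (by positivity), ih]
    have h2 : (2*(n+1)) = (2*n+1) + 1 := by omega
    rw [h2, Nat.factorial_succ, Nat.factorial_succ, Nat.factorial_succ]
    push_cast
    have h4 : (4:ℝ)^(n+1) = 4 * 4^n := by ring
    rw [h4]
    have hne1 : (4:ℝ)^n ≠ 0 := by positivity
    have hne2 : (n.factorial : ℝ) ≠ 0 := by positivity
    field_simp
    ring

lemma lhs_eq (L m : ℕ) (x₀ v : ℝ) :
    (∑ j ∈ range (2*m+1), (((L+j).choose L * ((2*m+L-j).choose L) : ℕ) : ℂ)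
        * ((x₀:ℂ) + (v:ℂ) * Complex.I)^(2*m-j) * ((x₀:ℂ) - (v:ℂ) * Complex.I)^j).re
    = ∑ k ∈ range (m+1), (-1:ℝ)^k * (((2*m-k).choose k * ((2*m+L-k).choose L) : ℕ) : ℝ)
        * (2*x₀)^(2*(m-k)) * (x₀^2+v^2)^k := by
  have hform : ∀ j ∈ range (2*m+1),
      (((L+j).choose L * ((2*m+L-j).choose L) : ℕ) : ℂ)
          * ((x₀:ℂ) + (v:ℂ) * Complex.I)^(2*m-j) * ((x₀:ℂ) - (v:ℂ) * Complex.I)^j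
        = (((L+j).choose L * ((2*m+L-j).choose L) : ℕ) : ℂ)
          * ((x₀:ℂ) + (v:ℂ) * Complex.I)^(2*m-j) * ((x₀:ℂ) - (v:ℂ) * Complex.I)^j := fun _ _ => rfl
  rw [geg L m ((x₀:ℂ) + (v:ℂ) * Complex.I) ((x₀:ℂ) - (v:ℂ) * Complex.I)]
  have hsum : ((x₀:ℂ) + (v:ℂ) * Complex.I) + ((x₀:ℂ) - (v:ℂ) * Complex.I) = ((2*x₀ : ℝ) : ℂ) := by
    push_cast; ring
  have hprod : ((x₀:ℂ) + (v:ℂ) * Complex.I) * ((x₀:ℂ) - (v:ℂ) * Complex.I)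
      = ((x₀^2 + v^2 : ℝ) : ℂ) := by
    have : ((x₀:ℂ) + (v:ℂ) * Complex.I) * ((x₀:ℂ) - (v:ℂ) * Complex.I)
        = (x₀:ℂ)^2 - (v:ℂ)^2 * Complex.I^2 := by ring
    rw [this, Complex.I_sq]
    push_cast; ring
  rw [hsum, hprod]
  have : ∑ k ∈ range (m+1), (-1:ℂ)^k * (((2*m-k).choose k * ((2*m+L-k).choose L) : ℕ) : ℂ)
          * (((2*x₀:ℝ):ℂ)^(2*m-2*k) * ((x₀^2+v^2:ℝ):ℂ)^k)
      = ((∑ k ∈ range (m+1), (-1:ℝ)^k * (((2*m-k).choose k * ((2*m+L-k).choose L) : ℕ) : ℝ)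
          * (2*x₀)^(2*(m-k)) * (x₀^2+v^2)^k : ℝ) : ℂ) := by
    push_cast
    apply Finset.sum_congr rfl
    intro k hk
    have hk' : k ≤ m := by simpa using Nat.lt_succ_iff.mp (Finset.mem_range.mp hk)
    have e : 2*m-2*k = 2*(m-k) := by omega
    rw [e]
    ring
  rw [this, Complex.ofReal_re]

end Aux

/-- The Jacobi polynomials, given by the explicit formula
`P_n^{(α,β)}(z) = (Γ(α+n+1)/(n! Γ(n+α+β+1))) ∑_{ν=0}^n C(n,ν) (Γ(n+α+β+ν+1)/Γ(α+ν+1)) ((z-1)/2)^ν`. -/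
noncomputable def jacobiP (n : ℕ) (α β z : ℝ) : ℝ :=
  Real.Gamma (α + n + 1) / (Nat.factorial n * Real.Gamma (n + α + β + 1)) *
    ∑ ν ∈ Finset.range (n + 1),
      (Nat.choose n ν : ℝ) * (Real.Gamma (n + α + β + ν + 1) / Real.Gamma (α + ν + 1)) *
        ((z - 1) / 2) ^ ν

-- the ℕ factorial identity
lemma nKey (L m ν : ℕ) (hν : ν ≤ m) :
    (m.choose ν) * (m+L+ν).factorial * ν.factorial
      = ((m+ν).choose (m-ν) * (m+L+ν).choose L) *
        (L.factorial * m.factorial * (2*ν).factorial) := by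
  apply Nat.eq_of_mul_eq_mul_right (show 0 < (m-ν).factorial by positivity)
  have n1 : m.choose ν * ν.factorial * (m-ν).factorial = m.factorial :=
    Nat.choose_mul_factorial_mul_factorial hν
  have n2a : (m+ν).choose (m-ν) * (m-ν).factorial * (2*ν).factorial = (m+ν).factorial := by
    have h := Nat.choose_mul_factorial_mul_factorial (show m-ν ≤ m+ν by omega)
    have e : m+ν - (m-ν) = 2*ν := by omega
    rwa [e] at h
  have n2b : (m+L+ν).choose L * L.factorial * (m+ν).factorial = (m+L+ν).factorial := by
    have h := Nat.choose_mul_factorial_mul_factorial (show L ≤ m+L+ν by omega)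
    have e : m+L+ν - L = m+ν := by omega
    rwa [e] at h
  calc m.choose ν * (m+L+ν).factorial * ν.factorial * (m-ν).factorial
      = (m.choose ν * ν.factorial * (m-ν).factorial) * (m+L+ν).factorial := by ring
    _ = m.factorial * (m+L+ν).factorial := by rw [n1]
    _ = m.factorial * ((m+L+ν).choose L * L.factorial *
          ((m+ν).choose (m-ν) * (m-ν).factorial * (2*ν).factorial)) := by rw [n2a, n2b]
    _ = (m+ν).choose (m-ν) * (m+L+ν).choose L *
        (L.factorial * m.factorial * (2*ν).factorial) * (m-ν).factorial := by ring

lemma rhs_eq (L m : ℕ) (x₀ v : ℝ) (h : x₀ ^ 2 + v ^ 2 ≠ 0) :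
    (-1) ^ m * Real.sqrt Real.pi * Real.Gamma ((m : ℝ) + ((L+1:ℕ):ℝ)) * (x₀ ^ 2 + v ^ 2) ^ m /
        (Real.Gamma ((L+1:ℕ):ℝ) * Real.Gamma ((m : ℝ) + 1 / 2)) *
      jacobiP m (-(1 / 2)) ((2 * ((L+1:ℕ):ℝ) - 1) / 2) (1 - 2 * x₀ ^ 2 / (x₀ ^ 2 + v ^ 2))
    = ∑ k ∈ range (m+1), (-1:ℝ)^k * (((2*m-k).choose k * ((2*m+L-k).choose L) : ℕ) : ℝ)
        * (2*x₀)^(2*(m-k)) * (x₀^2+v^2)^k := by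
  -- reflect the RHS sum
  rw [← Finset.sum_range_reflect
    (fun k => (-1:ℝ)^k * (((2*m-k).choose k * ((2*m+L-k).choose L) : ℕ) : ℝ)
        * (2*x₀)^(2*(m-k)) * (x₀^2+v^2)^k) (m+1)]
  unfold jacobiP
  -- Gamma evaluations
  have gA : Real.Gamma (-(1/2) + (m:ℝ) + 1) = Real.Gamma ((m:ℝ) + 1/2) := by
    congr 1; ring
  have gB : Real.Gamma ((m:ℝ) + -(1/2) + (2 * ((L+1:ℕ):ℝ) - 1) / 2 + 1)
      = ((m+L).factorial : ℝ) := by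
    have e : (m:ℝ) + -(1/2) + (2 * ((L+1:ℕ):ℝ) - 1) / 2 + 1 = ((m+L:ℕ):ℝ) + 1 := by
      push_cast; ring
    rw [e, Real.Gamma_nat_eq_factorial]
  have gG : Real.Gamma ((m:ℝ) + ((L+1:ℕ):ℝ)) = ((m+L).factorial : ℝ) := by
    have e : (m:ℝ) + ((L+1:ℕ):ℝ) = ((m+L:ℕ):ℝ) + 1 := by push_cast; ring
    rw [e, Real.Gamma_nat_eq_factorial]
  have gF : Real.Gamma (((L+1:ℕ):ℝ)) = (L.factorial : ℝ) := by
    have e : ((L+1:ℕ):ℝ) = ((L:ℕ):ℝ) + 1 := by push_cast; ring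
    rw [e, Real.Gamma_nat_eq_factorial]
  rw [gA, gB, gG, gF, Finset.mul_sum, Finset.mul_sum]
  apply Finset.sum_congr rfl
  intro ν hν
  have hν' : ν ≤ m := by simpa using Nat.lt_succ_iff.mp (Finset.mem_range.mp hν)
  -- index simplifications on the reflected term
  have i1 : 2*m - (m - ν) = m + ν := by omega
  have i2 : 2*m + L - (m - ν) = m + L + ν := by omega
  have i3 : 2*(m - (m - ν)) = 2*ν := by omega
  have i4 : m + 1 - 1 - ν = m - ν := by omega
  simp only [i4, i1, i2, i3]
  -- Gamma evaluations inside the sum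
  have gC : Real.Gamma ((m:ℝ) + -(1/2) + (2 * ((L+1:ℕ):ℝ) - 1) / 2 + (ν:ℝ) + 1)
      = ((m+L+ν).factorial : ℝ) := by
    have e : (m:ℝ) + -(1/2) + (2 * ((L+1:ℕ):ℝ) - 1) / 2 + (ν:ℝ) + 1 = ((m+L+ν:ℕ):ℝ) + 1 := by
      push_cast; ring
    rw [e, Real.Gamma_nat_eq_factorial]
  have gD : Real.Gamma (-(1/2) + (ν:ℝ) + 1)
      = (2*ν).factorial * Real.sqrt Real.pi / (4^ν * ν.factorial) := by
    have e : -(1/2) + (ν:ℝ) + 1 = (ν:ℝ) + 1/2 := by ring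
    rw [e, Gamma_nat_add_half]
  rw [gC, gD]
  -- argument simplification
  have harg : (1 - 2 * x₀ ^ 2 / (x₀ ^ 2 + v ^ 2) - 1) / 2 = -(x₀^2) / (x₀^2+v^2) := by
    field_simp
    ring
  rw [harg]
  -- nonzeroness
  have hπ : Real.sqrt Real.pi ≠ 0 := by
    have := Real.pi_pos; positivity
  have hΓ : Real.Gamma ((m:ℝ) + 1/2) ≠ 0 := by
    have : (0:ℝ) < (m:ℝ) + 1/2 := by positivity
    exact (Real.Gamma_pos_of_pos this).ne'
  have hr : (x₀^2+v^2 : ℝ) ≠ 0 := h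
  have key := nKey L m ν hν'
  have keyR : ((m.choose ν : ℕ):ℝ) * ((m+L+ν).factorial:ℝ) * (ν.factorial:ℝ)
      = (((m+ν).choose (m-ν) : ℕ):ℝ) * (((m+L+ν).choose L : ℕ):ℝ) *
        ((L.factorial:ℝ) * (m.factorial:ℝ) * ((2*ν).factorial:ℝ)) := by
    exact_mod_cast key
  -- power manipulations
  have p1 : (x₀^2+v^2)^m = (x₀^2+v^2)^ν * (x₀^2+v^2)^(m-ν) := by
    rw [← pow_add]; congr 1; omega
  have p2 : (-(x₀^2) / (x₀^2+v^2))^ν = (-1)^ν * (x₀^2)^ν / (x₀^2+v^2)^ν := by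
    rw [div_pow, neg_pow]
  have p3 : (2*x₀)^(2*ν) = 4^ν * (x₀^2)^ν := by
    rw [pow_mul, show (2*x₀)^2 = 4*x₀^2 by ring, mul_pow]
  have psign : ((-1:ℝ))^(m-ν) = (-1)^m * (-1)^ν := by
    rw [← pow_add]
    have : m + ν = (m - ν) + 2*ν := by omega
    rw [this, pow_add, pow_mul]
    try norm_num
  rw [p1, p2, p3, psign]
  set G := Real.Gamma ((m:ℝ) + 1/2) with hG
  have h4ν : (4:ℝ)^ν ≠ 0 := by positivity
  have hrν : ((x₀^2+v^2):ℝ)^ν ≠ 0 := pow_ne_zero _ hr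
  have hfacs : (m.factorial:ℝ) ≠ 0 := by positivity
  have hfacL : (L.factorial:ℝ) ≠ 0 := by positivity
  have hfacν : (ν.factorial:ℝ) ≠ 0 := by positivity
  have hfac2ν : ((2*ν).factorial:ℝ) ≠ 0 := by positivity
  have hfacmL : ((m+L).factorial:ℝ) ≠ 0 := by positivity
  field_simp
  push_cast at keyR ⊢
  linear_combination (x₀^(2*ν)) * keyR

/-- **Proposition 5.5, odd case.** The polynomial `H_ℓ^{2m+2ℓ-1}(x)` (computed by substituting
`x₀ + iv` for `x` and `x₀ - iv` for `x̄` and taking the real part, with `r² = x₀² + v²`) equals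
`(-1)^m √π Γ(m+ℓ) r^{2m} / (Γ(ℓ) Γ(m+1/2)) · P_m^{(-1/2,(2ℓ-1)/2)}(1 - 2x₀²/r²)`. -/
theorem Hpoly_odd_eq_jacobi (ℓ m : ℕ) (hℓ : 1 ≤ ℓ) (x₀ v : ℝ) (h : x₀ ^ 2 + v ^ 2 ≠ 0) :
    (∑ j ∈ Finset.range (2 * m + 1),
      ((Nat.choose (ℓ - 1 + j) (ℓ - 1) * Nat.choose (2 * m + ℓ - 1 - j) (ℓ - 1) : ℕ) : ℂ) *
        ((x₀ : ℂ) + (v : ℂ) * Complex.I) ^ (2 * m - j) *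
        ((x₀ : ℂ) - (v : ℂ) * Complex.I) ^ j).re =
      (-1) ^ m * Real.sqrt Real.pi * Real.Gamma ((m : ℝ) + ℓ) * (x₀ ^ 2 + v ^ 2) ^ m /
          (Real.Gamma ℓ * Real.Gamma ((m : ℝ) + 1 / 2)) *
        jacobiP m (-(1 / 2)) ((2 * (ℓ : ℝ) - 1) / 2) (1 - 2 * x₀ ^ 2 / (x₀ ^ 2 + v ^ 2)) := by
  obtain ⟨L, rfl⟩ : ∃ L, ℓ = L + 1 := ⟨ℓ - 1, by omega⟩
  have hL := lhs_eq L m x₀ v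
  have hR := rhs_eq L m x₀ v h
  exact hL.trans hR.symm
end

section
/- Let ℓ ≥ 1, k ≥ 2 and 1 ≤ j ≤ k−1 be integers. Then, as an identity of integers, (k−j)·C_{j−1}^{k−2+2ℓ}(ℓ) + j·C_{j}^{k−2+2ℓ}(ℓ) − (k+ℓ−1)·( C_{j}^{k−2+2ℓ}(ℓ) + C_{j−1}^{k−2+2ℓ}(ℓ) ) = −k·C_{j}^{k−1+2ℓ}(ℓ), where C_j^K(ℓ) := C(ℓ+j−1, ℓ−1)·C(K−ℓ−j, ℓ−1). (Proposition 7.1, item (c) of the paper: the coefficient identity used in the inductive proof of Proposition 5.4.) -/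
def Ccoef (ℓ K j : ℕ) : ℤ :=
  (Nat.choose (ℓ + j - 1) (ℓ - 1) * Nat.choose (K - ℓ - j) (ℓ - 1) : ℕ)

lemma absorb (a n : ℕ) :
    ((n : ℤ) + 1) * (Nat.choose (a + n + 1) a : ℕ) =
      ((a : ℤ) + n + 1) * (Nat.choose (a + n) a : ℕ) := by
  have hs : Nat.choose (a + n) n = Nat.choose (a + n) a := by
    have := Nat.choose_symm (Nat.le_add_left n a)
    simpa [Nat.add_sub_cancel] using this.symm
  have hs' : Nat.choose (a + n + 1) (n + 1) = Nat.choose (a + n + 1) a := by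
    have := Nat.choose_symm (show n + 1 ≤ a + n + 1 by omega)
    simpa [show a + n + 1 - (n + 1) = a by omega] using this.symm
  have h := Nat.add_one_mul_choose_eq (a + n) n
  rw [hs, hs'] at h
  zify at h
  linear_combination -h

/-- **Proposition 7.1, item (c).** For `ℓ ≥ 1`, `k ≥ 2` and `1 ≤ j ≤ k-1`:
`(k-j) C_{j-1}^{k-2+2ℓ}(ℓ) + j C_j^{k-2+2ℓ}(ℓ) - (k+ℓ-1)(C_j^{k-2+2ℓ}(ℓ) + C_{j-1}^{k-2+2ℓ}(ℓ))
  = -k C_j^{k-1+2ℓ}(ℓ)`. -/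
theorem Ccoef_identity_c (ℓ k j : ℕ) (hℓ : 1 ≤ ℓ) (hk : 2 ≤ k) (hj1 : 1 ≤ j)
    (hj2 : j ≤ k - 1) :
    ((k : ℤ) - j) * Ccoef ℓ (k - 2 + 2 * ℓ) (j - 1) + (j : ℤ) * Ccoef ℓ (k - 2 + 2 * ℓ) j -
        ((k : ℤ) + ℓ - 1) * (Ccoef ℓ (k - 2 + 2 * ℓ) j + Ccoef ℓ (k - 2 + 2 * ℓ) (j - 1)) =
      -(k : ℤ) * Ccoef ℓ (k - 1 + 2 * ℓ) j := by
  obtain ⟨a, rfl⟩ : ∃ a, ℓ = a + 1 := ⟨ℓ - 1, by omega⟩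
  obtain ⟨i, rfl⟩ : ∃ i, j = i + 1 := ⟨j - 1, by omega⟩
  obtain ⟨d, rfl⟩ : ∃ d, k = i + d + 2 := ⟨k - i - 2, by omega⟩
  set A : ℤ := ((Nat.choose (a + i) a : ℕ) : ℤ) with hA
  set A' : ℤ := ((Nat.choose (a + i + 1) a : ℕ) : ℤ) with hA'
  set B : ℤ := ((Nat.choose (a + d) a : ℕ) : ℤ) with hB
  set B' : ℤ := ((Nat.choose (a + d + 1) a : ℕ) : ℤ) with hB'
  have e1 : Ccoef (a+1) (i + d + 2 - 2 + 2 * (a+1)) (i + 1 - 1) = A * B' := by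
    unfold Ccoef
    rw [show a + 1 + (i + 1 - 1) - 1 = a + i from by omega,
        show a + 1 - 1 = a from by omega,
        show i + d + 2 - 2 + 2 * (a + 1) - (a + 1) - (i + 1 - 1) = a + d + 1 from by omega]
    push_cast; ring
  have e2 : Ccoef (a+1) (i + d + 2 - 2 + 2 * (a+1)) (i + 1) = A' * B := by
    unfold Ccoef
    rw [show a + 1 + (i + 1) - 1 = a + i + 1 from by omega,
        show a + 1 - 1 = a from by omega,
        show i + d + 2 - 2 + 2 * (a + 1) - (a + 1) - (i + 1) = a + d from by omega]
    push_cast; ring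
  have e3 : Ccoef (a+1) (i + d + 2 - 1 + 2 * (a+1)) (i + 1) = A' * B' := by
    unfold Ccoef
    rw [show a + 1 + (i + 1) - 1 = a + i + 1 from by omega,
        show a + 1 - 1 = a from by omega,
        show i + d + 2 - 1 + 2 * (a + 1) - (a + 1) - (i + 1) = a + d + 1 from by omega]
    push_cast; ring
  rw [e1, e2, e3]
  have h1 : ((i : ℤ) + 1) * A' = ((a : ℤ) + i + 1) * A := absorb a i
  have h2 : ((d : ℤ) + 1) * B' = ((a : ℤ) + d + 1) * B := absorb a d
  push_cast
  linear_combination B' * h1 + A' * h2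
end

section
/- Let ℓ ≥ 1, k ≥ 2ℓ+1 and 1 ≤ j ≤ k−2ℓ be integers. Then, as an identity of integers, C_{j}^{k+2}(ℓ+1) − C_{j}^{k+1}(ℓ+1) − C_{j−1}^{k+1}(ℓ+1) + C_{j−1}^{k}(ℓ+1) = C_{j}^{k}(ℓ), where C_j^K(ℓ) := C(ℓ+j−1, ℓ−1)·C(K−ℓ−j, ℓ−1), so that C_j^K(ℓ+1) = C(ℓ+j, ℓ)·C(K−ℓ−1−j, ℓ). (Proposition 7.1, item (e) of the paper: the coefficient identity used in the proof of the recursion Lemma 5.9.) -/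
/-- **Proposition 7.1, item (e).** For `ℓ ≥ 1`, `k ≥ 2ℓ+1` and `1 ≤ j ≤ k-2ℓ`:
`C_j^{k+2}(ℓ+1) - C_j^{k+1}(ℓ+1) - C_{j-1}^{k+1}(ℓ+1) + C_{j-1}^{k}(ℓ+1) = C_j^{k}(ℓ)`. -/
theorem Ccoef_identity_e (ℓ k j : ℕ) (hℓ : 1 ≤ ℓ) (hk : 2 * ℓ + 1 ≤ k) (hj1 : 1 ≤ j)
    (hj2 : j ≤ k - 2 * ℓ) :
    Ccoef (ℓ + 1) (k + 2) j - Ccoef (ℓ + 1) (k + 1) j - Ccoef (ℓ + 1) (k + 1) (j - 1) +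
        Ccoef (ℓ + 1) k (j - 1) =
      Ccoef ℓ k j := by
  obtain ⟨ll, rfl⟩ : ∃ ll, ℓ = ll + 1 := ⟨ℓ - 1, by omega⟩
  obtain ⟨jj, rfl⟩ : ∃ jj, j = jj + 1 := ⟨j - 1, by omega⟩
  obtain ⟨m, rfl⟩ : ∃ m, k = 2 * (ll + 1) + (jj + 1) + m := ⟨k - (2 * (ll + 1) + (jj + 1)), by omega⟩
  simp only [Ccoef]
  rw [show ll + 1 + 1 + (jj + 1) - 1 = ll + jj + 1 + 1 from by omega,
    show ll + 1 + 1 - 1 = ll + 1 from by omega,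
    show 2 * (ll + 1) + (jj + 1) + m + 2 - (ll + 1 + 1) - (jj + 1) = ll + m + 1 + 1 from by omega,
    show 2 * (ll + 1) + (jj + 1) + m + 1 - (ll + 1 + 1) - (jj + 1) = ll + m + 1 from by omega,
    show jj + 1 - 1 = jj from by omega,
    show ll + 1 + 1 + jj - 1 = ll + jj + 1 from by omega,
    show 2 * (ll + 1) + (jj + 1) + m + 1 - (ll + 1 + 1) - jj = ll + m + 1 + 1 from by omega,
    show 2 * (ll + 1) + (jj + 1) + m - (ll + 1 + 1) - jj = ll + m + 1 from by omega,
    show ll + 1 + (jj + 1) - 1 = ll + jj + 1 from by omega,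
    show ll + 1 - 1 = ll from by omega,
    show 2 * (ll + 1) + (jj + 1) + m - (ll + 1) - (jj + 1) = ll + m + 1 from by omega]
  rw [Nat.choose_succ_succ (ll + jj + 1) ll, Nat.choose_succ_succ (ll + m + 1) ll]
  push_cast
  ring
end
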